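/- arXiv:1902.02124 — 5 statements merged into one kernel-verified Lean document; each statement's English description precedes it below -/
import Mathlib

section
/- Two k-partial permutations (d₁, ω₁) and (d₂, ω₂) of n lie in the same orbit under the conjugation-type action of B_{kn}^k if and only if |d₁| = |d₂| and ω₁ and ω₂ have the same type (the family of partitions (ω(ρ))_{ρ ⊢ k}). -/
open Equiv Finset

namespace KWr

/-- The `i`-th block `p_k(i)` (0-indexed): elements `x ∈ [kn]` with `x / k = i`. -/
def pk (k n : ℕ) (i : ℕ) : Finset (Fin (k * n)) :=
  Finset.univ.filter (fun x => (x : ℕ) / k = i)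

/-- `w` maps every block onto some block. -/
def IsBlockPerm (k n : ℕ) (w : Perm (Fin (k * n))) : Prop :=
  ∀ i : Fin n, ∃ j : Fin n, (pk k n (i : ℕ)).image w = pk k n (j : ℕ)

theorem isBlockPerm_one (k n : ℕ) : IsBlockPerm k n 1 := fun i =>
  ⟨i, by simp [pk]⟩

theorem isBlockPerm_mul (k n : ℕ) {a b : Perm (Fin (k * n))}
    (ha : IsBlockPerm k n a) (hb : IsBlockPerm k n b) : IsBlockPerm k n (a * b) := by
  intro i
  obtain ⟨j, hj⟩ := hb i
  obtain ⟨l, hl⟩ := ha j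
  refine ⟨l, ?_⟩
  rw [← hl, ← hj, Finset.image_image]
  rfl

theorem isBlockPerm_pow (k n : ℕ) {a : Perm (Fin (k * n))} (ha : IsBlockPerm k n a) :
    ∀ m : ℕ, IsBlockPerm k n (a ^ m) := by
  intro m
  induction m with
  | zero => simpa using isBlockPerm_one k n
  | succ m ih => rw [pow_succ]; exact isBlockPerm_mul k n ih ha

/-- The group `B_{kn}^k` of block permutations, as a subgroup of `S_{kn}`. -/
def Bgrp (k n : ℕ) : Subgroup (Perm (Fin (k * n))) where
  carrier := {w | IsBlockPerm k n w}
  one_mem' := isBlockPerm_one k n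
  mul_mem' := fun ha hb => isBlockPerm_mul k n ha hb
  inv_mem' := by
    intro a ha
    have ho : 0 < orderOf a := orderOf_pos a
    have h1 : a⁻¹ = a ^ (orderOf a - 1) := by
      have h : a ^ (orderOf a - 1) * a = 1 := by
        rw [← pow_succ, Nat.sub_add_cancel ho, pow_orderOf_eq_one]
      exact inv_eq_of_mul_eq_one_left h
    show IsBlockPerm k n a⁻¹
    rw [h1]
    exact isBlockPerm_pow k n ha _

/-- The first element of the `i`-th block. -/
def elemIn (k n : ℕ) (hk : 0 < k) (i : Fin n) : Fin (k * n) :=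
  ⟨(i : ℕ) * k, by
    calc (i : ℕ) * k < n * k := by
          exact Nat.mul_lt_mul_of_lt_of_le i.2 (le_refl k) hk
      _ = k * n := Nat.mul_comm n k⟩

/-- The map induced by `w` on block indices. -/
def blockMap (k n : ℕ) (hk : 0 < k) (w : Perm (Fin (k * n))) (i : Fin n) : Fin n :=
  ⟨((w (elemIn k n hk i)) : ℕ) / k, by
    refine (Nat.div_lt_iff_lt_mul hk).mpr ?_
    calc ((w (elemIn k n hk i)) : ℕ) < k * n := (w (elemIn k n hk i)).2
      _ = n * k := Nat.mul_comm k n⟩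

/-- The permutation `p_w` of block indices induced by a block permutation `w`. -/
noncomputable def pPerm (k n : ℕ) (hk : 0 < k) (w : Perm (Fin (k * n))) : Perm (Fin n) :=
  if h : Function.Bijective (blockMap k n hk w) then Equiv.ofBijective _ h else 1

/-- Length of the cycle of `i` under `p`. -/
noncomputable def cycLen {n : ℕ} (p : Perm (Fin n)) (i : Fin n) : ℕ := Function.minimalPeriod p i

/-- The `a`-th element of the `i`-th block. -/
def inBlock (k n : ℕ) (hk : 0 < k) (i : Fin n) (a : Fin k) : Fin (k * n) :=
  ⟨(i : ℕ) * k + (a : ℕ), by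
    calc (i : ℕ) * k + (a : ℕ) < (i : ℕ) * k + k := Nat.add_lt_add_left a.2 _
      _ = ((i : ℕ) + 1) * k := by ring
      _ ≤ n * k := Nat.mul_le_mul_right k i.2
      _ = k * n := Nat.mul_comm n k⟩

/-- The cycle product of `w` at the block `i`: the return map of `w` on the block `i`,
viewed as a permutation of `Fin k`. -/
noncomputable def cycProd (k n : ℕ) (hk : 0 < k) (w : Perm (Fin (k * n))) (i : Fin n) :
    Perm (Fin k) :=
  if h : Function.Bijective (fun a : Fin k =>
      (⟨((w ^ cycLen (pPerm k n hk w) i) (inBlock k n hk i a) : ℕ) % k,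
        Nat.mod_lt _ hk⟩ : Fin k))
  then Equiv.ofBijective _ h else 1

/-- The partition `(1^k)` of `k`. -/
def onePartition (k : ℕ) : Nat.Partition k where
  parts := Multiset.replicate k 1
  parts_pos := fun {i} hi => by rw [Multiset.eq_of_mem_replicate hi]; exact one_pos
  parts_sum := by simp

-- The type of a block permutation `w` of `[kn]`: for each partition `ρ` of `k`, the
-- multiset `tyFam k n hk w ρ` collects, over all cycles of the induced block permutation
-- `p_w` whose cycle product has cycle type `ρ`, the length of the cycle.
open scoped Classical in
noncomputable def tyFam (k n : ℕ) (hk : 0 < k) (w : Perm (Fin (k * n)))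
    (ρ : Nat.Partition k) : Multiset ℕ :=
  (Finset.univ.filter (fun i : Fin n =>
      (∀ j : Fin n, (pPerm k n hk w).SameCycle i j → i ≤ j) ∧
      (cycProd k n hk w i).partition.parts = ρ.parts)).val.map
    (fun i => cycLen (pPerm k n hk w) i)

/-- Total size of a family of partitions indexed by the partitions of `k`. -/
noncomputable def famSize (k : ℕ) (Λ : Nat.Partition k → Multiset ℕ) : ℕ :=
  ∑ ρ : Nat.Partition k, (Λ ρ).sum

-- Complete a family of partitions `Λ` to total size `n` by adding parts `1`
-- to the component indexed by `(1^k)`.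
open scoped Classical in
noncomputable def ExtFam (k n : ℕ) (Λ : Nat.Partition k → Multiset ℕ) :
    Nat.Partition k → Multiset ℕ := fun ρ =>
  if ρ = onePartition k then Λ ρ + Multiset.replicate (n - famSize k Λ) 1 else Λ ρ

/-- `z_λ = ∏ r, r^{m_r(λ)} m_r(λ)!` for a partition given as a multiset of parts. -/
def zOf (m : Multiset ℕ) : ℕ :=
  ∏ r ∈ m.toFinset, r ^ m.count r * Nat.factorial (m.count r)

/-- `Z_Λ = ∏_{λ ⊢ k} z_{Λ(λ)} z_λ^{l(Λ(λ))}`. -/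
noncomputable def ZFam (k : ℕ) (Λ : Nat.Partition k → Multiset ℕ) : ℕ :=
  ∏ ρ : Nat.Partition k, zOf (Λ ρ) * zOf ρ.parts ^ (Multiset.card (Λ ρ))

/-- A `k`-partial permutation of `n`, encoded as a pair `(s, w)` where `s` is the set of
block indices of `d` and `w` is the extension of `ω` to `[kn]` by the identity:
`w` is a block permutation fixing pointwise every block outside `s`. -/
def IsKPP (k n : ℕ) (pr : Finset (Fin n) × Perm (Fin (k * n))) : Prop :=
  IsBlockPerm k n pr.2 ∧
    ∀ x : Fin (k * n), (¬ ∃ i ∈ pr.1, (x : ℕ) / k = (i : ℕ)) → pr.2 x = x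

/-- The set of `k`-partial permutations of `n`. -/
def KPP (k n : ℕ) : Type := {pr : Finset (Fin n) × Perm (Fin (k * n)) // IsKPP k n pr}

/-- The action `σ · (d, ω) = (σ(d), σωσ⁻¹)` on (the underlying data of)
`k`-partial permutations. -/
noncomputable def actKPP (k n : ℕ) (hk : 0 < k) (σ : Perm (Fin (k * n)))
    (pr : Finset (Fin n) × Perm (Fin (k * n))) : Finset (Fin n) × Perm (Fin (k * n)) :=
  (pr.1.image (fun i => pPerm k n hk σ i), σ * pr.2 * σ⁻¹)

/-- A `k`-partial permutation `(d, ω)` has type `Λ` (a family of partitions indexed by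
the partitions of `k`) iff `d` consists of `|Λ|` blocks and the type of `ω` is `Λ`;
in terms of the global extension `w`, the type of `w` is `Λ` completed with
`n - |Λ|` parts equal to `1` in the component `(1^k)`. -/
def HasTypeKPP (k n : ℕ) (hk : 0 < k) (p : KPP k n)
    (Λ : Nat.Partition k → Multiset ℕ) : Prop :=
  p.val.1.card = famSize k Λ ∧ ∀ ρ, tyFam k n hk p.val.2 ρ = ExtFam k n Λ ρ

/-- `deg₁(d, ω)`: the number of blocks of `d` plus the number of blocks of `d` on which
`ω` acts as the identity. -/
def deg1 (k n : ℕ) (pr : Finset (Fin n) × Perm (Fin (k * n))) : ℕ :=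
  pr.1.card +
    (pr.1.filter (fun i : Fin n => ∀ x : Fin (k * n), (x : ℕ) / k = (i : ℕ) → pr.2 x = x)).card


/-- The automorphism of `S_k^n` permuting coordinates by `σ`. -/
def permCoordAut (k n : ℕ) (σ : Perm (Fin n)) : MulAut (Fin n → Perm (Fin k)) where
  toFun f := f ∘ σ.symm
  invFun f := f ∘ σ
  left_inv f := by funext i; simp
  right_inv f := by funext i; simp
  map_mul' f g := rfl

/-- The action of `S_n` on `S_k^n` permuting coordinates, as a homomorphism. -/
def permCoordHom (k n : ℕ) : Perm (Fin n) →* MulAut (Fin n → Perm (Fin k)) where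
  toFun := permCoordAut k n
  map_one' := by apply MulEquiv.ext; intro f; rfl
  map_mul' σ τ := by apply MulEquiv.ext; intro f; rfl

-- The class sum, in the group algebra of `S_n`, of the permutations of cycle type `m`.
open scoped Classical in
noncomputable def CS (n : ℕ) (m : Multiset ℕ) : MonoidAlgebra ℂ (Perm (Fin n)) :=
  ∑ σ ∈ Finset.univ.filter (fun σ : Perm (Fin n) => σ.partition.parts = m),
    MonoidAlgebra.of ℂ (Perm (Fin n)) σ

theorem twoPos : (0 : ℕ) < 2 := by norm_num

-- The class sum, in the group algebra of the hyperoctahedral group `B_{2n}^2`, of the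
-- conjugacy class indexed by the bipartition `(l1, l2)` of `n`, where `l1` corresponds
-- to the partition `(1,1)` of `2` and `l2` to the partition `(2)`.
open scoped Classical in
noncomputable def CB (n : ℕ) (l1 l2 : Multiset ℕ) : MonoidAlgebra ℂ (Bgrp 2 n) :=
  ∑ w ∈ Finset.univ.filter (fun w : Bgrp 2 n =>
      tyFam 2 n twoPos (w : Perm (Fin (2 * n))) (onePartition 2) = l1 ∧
      tyFam 2 n twoPos (w : Perm (Fin (2 * n))) (Nat.Partition.indiscrete 2) = l2),
    MonoidAlgebra.of ℂ (Bgrp 2 n) w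


-- ==== AUX1 ====

section
variable {k n : ℕ}

@[simp] lemma inBlock_div (hk : 0 < k) (i : Fin n) (a : Fin k) :
    ((inBlock k n hk i a : ℕ)) / k = (i : ℕ) := by
  show ((i : ℕ) * k + (a : ℕ)) / k = (i : ℕ)
  rw [Nat.add_comm, Nat.add_mul_div_right _ _ hk, Nat.div_eq_of_lt a.2, Nat.zero_add]

@[simp] lemma inBlock_mod (hk : 0 < k) (i : Fin n) (a : Fin k) :
    ((inBlock k n hk i a : ℕ)) % k = (a : ℕ) := by
  show ((i : ℕ) * k + (a : ℕ)) % k = (a : ℕ)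
  rw [Nat.add_comm, Nat.add_mul_mod_self_right, Nat.mod_eq_of_lt a.2]

lemma blockOf_lt (hk : 0 < k) (x : Fin (k * n)) : (x : ℕ) / k < n :=
  (Nat.div_lt_iff_lt_mul hk).mpr (lt_of_lt_of_eq x.2 (Nat.mul_comm k n))

def blockOf (hk : 0 < k) (x : Fin (k * n)) : Fin n := ⟨(x : ℕ) / k, blockOf_lt hk x⟩
def offOf (hk : 0 < k) (x : Fin (k * n)) : Fin k := ⟨(x : ℕ) % k, Nat.mod_lt _ hk⟩

@[simp] lemma inBlock_blockOf (hk : 0 < k) (x : Fin (k * n)) :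
    inBlock k n hk (blockOf hk x) (offOf hk x) = x := by
  apply Fin.ext
  show ((x : ℕ) / k) * k + (x : ℕ) % k = (x : ℕ)
  exact Nat.div_add_mod' _ _

lemma inBlock_inj (hk : 0 < k) {i j : Fin n} {a b : Fin k}
    (h : inBlock k n hk i a = inBlock k n hk j b) : i = j ∧ a = b := by
  constructor
  · apply Fin.ext
    rw [← inBlock_div hk i a, ← inBlock_div hk j b, h]
  · apply Fin.ext
    rw [← inBlock_mod hk i a, ← inBlock_mod hk j b, h]

lemma mem_pk {x : Fin (k * n)} {i : ℕ} : x ∈ pk k n i ↔ (x : ℕ) / k = i := by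
  simp [pk]

lemma elemIn_eq (hk : 0 < k) (i : Fin n) : elemIn k n hk i = inBlock k n hk i ⟨0, hk⟩ := by
  apply Fin.ext; simp [elemIn, inBlock]

lemma inBlock_mem_pk (hk : 0 < k) (i : Fin n) (a : Fin k) : inBlock k n hk i a ∈ pk k n i :=
  mem_pk.mpr (inBlock_div hk i a)

lemma pk_index_eq (hk : 0 < k) {i j : Fin n} (h : pk k n (i : ℕ) = pk k n (j : ℕ)) :
    i = j := by
  have := h ▸ inBlock_mem_pk hk i ⟨0, hk⟩
  exact Fin.ext ((inBlock_div hk i ⟨0, hk⟩).symm.trans (mem_pk.mp this))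

variable {w : Perm (Fin (k * n))}

lemma image_pk (hk : 0 < k) (hw : IsBlockPerm k n w) (i : Fin n) :
    (pk k n (i : ℕ)).image w = pk k n ((blockMap k n hk w i : Fin n) : ℕ) := by
  obtain ⟨j, hj⟩ := hw i
  have hmem : w (elemIn k n hk i) ∈ pk k n (j : ℕ) := by
    rw [← hj]
    exact Finset.mem_image_of_mem _ (by
      rw [elemIn_eq hk]; exact inBlock_mem_pk hk i ⟨0, hk⟩)
  have : blockMap k n hk w i = j := Fin.ext (mem_pk.mp hmem)
  rw [this, hj]

lemma div_apply (hk : 0 < k) (hw : IsBlockPerm k n w) (i : Fin n) (a : Fin k) :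
    ((w (inBlock k n hk i a) : ℕ)) / k = (blockMap k n hk w i : ℕ) := by
  have : w (inBlock k n hk i a) ∈ pk k n ((blockMap k n hk w i : Fin n) : ℕ) := by
    rw [← image_pk hk hw i]
    exact Finset.mem_image_of_mem _ (inBlock_mem_pk hk i a)
  exact mem_pk.mp this

lemma blockMap_bijective (hk : 0 < k) (hw : IsBlockPerm k n w) :
    Function.Bijective (blockMap k n hk w) := by
  rw [Fintype.bijective_iff_injective_and_card]
  refine ⟨?_, rfl⟩
  intro i j h
  have h1 := image_pk hk hw i
  have h2 := image_pk hk hw j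
  rw [h] at h1
  have h3 : (pk k n (i : ℕ)).image w = (pk k n (j : ℕ)).image w := h1.trans h2.symm
  have hp : pk k n (i : ℕ) = pk k n (j : ℕ) := by
    have := congrArg (Finset.image w.symm) h3
    rwa [Finset.image_image, Finset.image_image,
      (by ext x; simp : (⇑w.symm ∘ ⇑w) = id), Finset.image_id, Finset.image_id] at this
  exact pk_index_eq hk hp

lemma pPerm_apply (hk : 0 < k) (hw : IsBlockPerm k n w) (i : Fin n) :
    pPerm k n hk w i = blockMap k n hk w i := by
  rw [pPerm, dif_pos (blockMap_bijective hk hw)]; rfl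

def uResFun (k n : ℕ) (hk : 0 < k) (w : Perm (Fin (k * n))) (i : Fin n) (a : Fin k) : Fin k :=
  ⟨((w (inBlock k n hk i a)) : ℕ) % k, Nat.mod_lt _ hk⟩

lemma uResFun_bijective (hk : 0 < k) (hw : IsBlockPerm k n w) (i : Fin n) :
    Function.Bijective (uResFun k n hk w i) := by
  rw [Fintype.bijective_iff_injective_and_card]
  refine ⟨?_, rfl⟩
  intro a b h
  have hdiv : ((w (inBlock k n hk i a) : ℕ)) / k = ((w (inBlock k n hk i b) : ℕ)) / k := by
    rw [div_apply hk hw, div_apply hk hw]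
  have hmod : ((w (inBlock k n hk i a) : ℕ)) % k = ((w (inBlock k n hk i b) : ℕ)) % k :=
    congrArg Fin.val h
  have hx : w (inBlock k n hk i a) = w (inBlock k n hk i b) := by
    apply Fin.ext
    calc ((w (inBlock k n hk i a) : ℕ))
        = ((w (inBlock k n hk i a) : ℕ)) / k * k + ((w (inBlock k n hk i a) : ℕ)) % k :=
          (Nat.div_add_mod' _ _).symm
      _ = ((w (inBlock k n hk i b) : ℕ)) / k * k + ((w (inBlock k n hk i b) : ℕ)) % k := by
          rw [hdiv, hmod]
      _ = ((w (inBlock k n hk i b) : ℕ)) := Nat.div_add_mod' _ _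
  exact (inBlock_inj hk (w.injective hx)).2

noncomputable def uRes (hk : 0 < k) (w : Perm (Fin (k * n))) (hw : IsBlockPerm k n w)
    (i : Fin n) : Perm (Fin k) :=
  Equiv.ofBijective _ (uResFun_bijective hk hw i)

@[simp] lemma uRes_apply (hk : 0 < k) (hw : IsBlockPerm k n w) (i : Fin n) (a : Fin k) :
    uRes hk w hw i a = uResFun k n hk w i a := rfl

/-- The master decomposition lemma. -/
lemma apply_inBlock (hk : 0 < k) (hw : IsBlockPerm k n w) (i : Fin n) (a : Fin k) :
    w (inBlock k n hk i a) = inBlock k n hk (pPerm k n hk w i) (uRes hk w hw i a) := by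
  apply Fin.ext
  show ((w (inBlock k n hk i a)) : ℕ)
      = ((pPerm k n hk w i : Fin n) : ℕ) * k + ((uRes hk w hw i a : Fin k) : ℕ)
  rw [pPerm_apply hk hw]
  have h1 : ((uRes hk w hw i a : Fin k) : ℕ) = ((w (inBlock k n hk i a)) : ℕ) % k := rfl
  have h2 := div_apply hk hw i a
  rw [h1, ← h2]
  exact (Nat.div_add_mod' _ _).symm

end


-- ==== AUX1b ====
section
variable {k n : ℕ}

lemma isBlockPerm_inv {w : Perm (Fin (k * n))} (hw : IsBlockPerm k n w) :
    IsBlockPerm k n w⁻¹ :=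
  (Bgrp k n).inv_mem (show w ∈ Bgrp k n from hw)

lemma pPerm_one (hk : 0 < k) : pPerm k n hk 1 = 1 := by
  apply Equiv.ext; intro i
  rw [pPerm_apply hk (isBlockPerm_one k n)]
  apply Fin.ext
  show ((elemIn k n hk i : Fin (k * n)) : ℕ) / k = (i : ℕ)
  rw [elemIn_eq hk, inBlock_div]

lemma pPerm_mul (hk : 0 < k) {v w : Perm (Fin (k * n))}
    (hv : IsBlockPerm k n v) (hw : IsBlockPerm k n w) :
    pPerm k n hk (v * w) = pPerm k n hk v * pPerm k n hk w := by
  apply Equiv.ext; intro i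
  have h1 := apply_inBlock hk (isBlockPerm_mul k n hv hw) i ⟨0, hk⟩
  have h2 : (v * w) (inBlock k n hk i ⟨0, hk⟩)
      = inBlock k n hk (pPerm k n hk v (pPerm k n hk w i))
        (uRes hk v hv (pPerm k n hk w i) (uRes hk w hw i ⟨0, hk⟩)) := by
    show v (w _) = _
    rw [apply_inBlock hk hw, apply_inBlock hk hv]
  exact (inBlock_inj hk (h1.symm.trans h2)).1

lemma pPerm_inv (hk : 0 < k) {w : Perm (Fin (k * n))} (hw : IsBlockPerm k n w) :
    pPerm k n hk w⁻¹ = (pPerm k n hk w)⁻¹ := by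
  have h : pPerm k n hk w⁻¹ * pPerm k n hk w = 1 := by
    rw [← pPerm_mul hk (isBlockPerm_inv hw) hw, inv_mul_cancel, pPerm_one]
  exact eq_inv_of_mul_eq_one_left h

lemma pPerm_pow (hk : 0 < k) {w : Perm (Fin (k * n))} (hw : IsBlockPerm k n w) (m : ℕ) :
    pPerm k n hk (w ^ m) = (pPerm k n hk w) ^ m := by
  induction m with
  | zero => simpa using pPerm_one hk
  | succ m ih =>
      rw [pow_succ, pPerm_mul hk (isBlockPerm_pow k n hw m) hw, ih, pow_succ]

lemma uRes_congr (hk : 0 < k) {v w : Perm (Fin (k * n))} (h : v = w)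
    (hv : IsBlockPerm k n v) (hw : IsBlockPerm k n w) (i : Fin n) :
    uRes hk v hv i = uRes hk w hw i := by subst h; rfl

lemma uRes_mul (hk : 0 < k) {v w : Perm (Fin (k * n))}
    (hv : IsBlockPerm k n v) (hw : IsBlockPerm k n w) (i : Fin n) :
    uRes hk (v * w) (isBlockPerm_mul k n hv hw) i
      = uRes hk v hv (pPerm k n hk w i) * uRes hk w hw i := by
  apply Equiv.ext; intro a
  have h1 := apply_inBlock hk (isBlockPerm_mul k n hv hw) i a
  have h2 : (v * w) (inBlock k n hk i a)
      = inBlock k n hk (pPerm k n hk v (pPerm k n hk w i))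
        (uRes hk v hv (pPerm k n hk w i) (uRes hk w hw i a)) := by
    show v (w _) = _
    rw [apply_inBlock hk hw, apply_inBlock hk hv]
  exact (inBlock_inj hk (h1.symm.trans h2)).2

lemma uRes_one (hk : 0 < k) (h1 : IsBlockPerm k n (1 : Perm (Fin (k * n)))) (i : Fin n) :
    uRes hk 1 h1 i = 1 := by
  apply Equiv.ext; intro a
  apply Fin.ext
  show (((1 : Perm (Fin (k * n))) (inBlock k n hk i a)) : ℕ) % k = (a : ℕ)
  exact inBlock_mod hk i a

-- minimalPeriod lemmas for permutations of a finite type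
lemma cycLen_pos {m : ℕ} (p : Perm (Fin m)) (i : Fin m) : 0 < cycLen p i := by
  apply Function.IsPeriodicPt.minimalPeriod_pos (orderOf_pos p)
  show Function.IsPeriodicPt _ _ i
  rw [Function.IsPeriodicPt, Equiv.Perm.iterate_eq_pow, pow_orderOf_eq_one]
  rfl

lemma pow_cycLen {m : ℕ} (p : Perm (Fin m)) (i : Fin m) : (p ^ cycLen p i) i = i := by
  have := Function.iterate_minimalPeriod (f := ⇑p) (x := i)
  rwa [Equiv.Perm.iterate_eq_pow] at this

lemma pow_mod_cycLen {m : ℕ} (p : Perm (Fin m)) (i : Fin m) (t : ℕ) :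
    (p ^ (t % cycLen p i)) i = (p ^ t) i := by
  have := Function.iterate_mod_minimalPeriod_eq (f := ⇑p) (x := i) (n := t)
  rwa [Equiv.Perm.iterate_eq_pow, Equiv.Perm.iterate_eq_pow] at this

lemma cycLen_conj {m : ℕ} (p c : Perm (Fin m)) (i : Fin m) :
    cycLen (c * p * c⁻¹) (c i) = cycLen p i := by
  show Function.minimalPeriod _ _ = Function.minimalPeriod _ _
  rw [Function.minimalPeriod_eq_minimalPeriod_iff]
  intro t
  have key : ((c * p * c⁻¹) ^ t) (c i) = c ((p ^ t) i) := by
    have : (c * p * c⁻¹) ^ t = c * p ^ t * c⁻¹ := by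
      induction t with
      | zero => group
      | succ s ih => rw [pow_succ, ih, pow_succ]; group
    rw [this]
    simp [Equiv.Perm.mul_apply]
  constructor <;> intro h
  · have : ((c * p * c⁻¹) ^ t) (c i) = c i := by
      rwa [Function.IsPeriodicPt, Equiv.Perm.iterate_eq_pow] at h
    rw [key] at this
    rw [Function.IsPeriodicPt, Equiv.Perm.iterate_eq_pow]
    exact c.injective this
  · have h' : (p ^ t) i = i := by
      rwa [Function.IsPeriodicPt, Equiv.Perm.iterate_eq_pow] at h
    rw [Function.IsPeriodicPt, Equiv.Perm.iterate_eq_pow]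
    show ((c * p * c⁻¹) ^ t) (c i) = c i
    rw [key, h']

lemma cycLen_apply {m : ℕ} (p : Perm (Fin m)) (i : Fin m) :
    cycLen p (p i) = cycLen p i := by
  have := cycLen_conj p p i
  rwa [mul_inv_cancel_right] at this

lemma cycLen_pow_apply {m : ℕ} (p : Perm (Fin m)) (i : Fin m) (t : ℕ) :
    cycLen p ((p ^ t) i) = cycLen p i := by
  induction t with
  | zero => simp
  | succ s ih => rw [pow_succ', Equiv.Perm.mul_apply, cycLen_apply, ih]

lemma cycLen_sameCycle {m : ℕ} {p : Perm (Fin m)} {i j : Fin m}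
    (h : p.SameCycle i j) : cycLen p i = cycLen p j := by
  obtain ⟨t, -, rfl⟩ := h.exists_pow_eq'
  rw [cycLen_pow_apply]

lemma cycLen_eq_one_iff {m : ℕ} {p : Perm (Fin m)} {i : Fin m} :
    cycLen p i = 1 ↔ p i = i := by
  show Function.minimalPeriod _ _ = 1 ↔ _
  rw [Function.minimalPeriod_eq_one_iff_isFixedPt]
  exact Iff.rfl

lemma pow_inj_of_lt_cycLen {m : ℕ} {p : Perm (Fin m)} {i : Fin m} {s t : ℕ}
    (hs : s < cycLen p i) (ht : t < cycLen p i) (h : (p ^ s) i = (p ^ t) i) : s = t := by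
  have := Function.iterate_injOn_Iio_minimalPeriod (f := ⇑p) (x := i)
  exact this (Set.mem_Iio.mpr hs) (Set.mem_Iio.mpr ht) h

end

-- ==== AUX1c ====
section
open scoped Classical
variable {k n : ℕ}

-- cycle representatives
noncomputable def repOf {m : ℕ} (p : Perm (Fin m)) (i : Fin m) : Fin m :=
  (Finset.univ.filter (fun j => p.SameCycle i j)).min'
    ⟨i, by simp [Equiv.Perm.SameCycle.refl]⟩

lemma sameCycle_repOf {m : ℕ} (p : Perm (Fin m)) (i : Fin m) : p.SameCycle i (repOf p i) := by
  have := (Finset.univ.filter (fun j => p.SameCycle i j)).min'_mem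
    ⟨i, by simp [Equiv.Perm.SameCycle.refl]⟩
  exact (Finset.mem_filter.mp this).2

lemma repOf_le {m : ℕ} {p : Perm (Fin m)} {i j : Fin m} (h : p.SameCycle i j) :
    repOf p i ≤ j :=
  Finset.min'_le _ _ (Finset.mem_filter.mpr ⟨Finset.mem_univ _, h⟩)

lemma repOf_eq_of_sameCycle {m : ℕ} {p : Perm (Fin m)} {i j : Fin m}
    (h : p.SameCycle i j) : repOf p i = repOf p j := by
  have hset : (Finset.univ.filter (fun l => p.SameCycle i l))
      = (Finset.univ.filter (fun l => p.SameCycle j l)) := by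
    ext l
    simp only [Finset.mem_filter, Finset.mem_univ, true_and]
    exact ⟨fun hl => h.symm.trans hl, fun hl => h.trans hl⟩
  simp only [repOf]
  congr 1

/-- `IsRep p i`: the condition appearing in `tyFam`. -/
def IsRep {m : ℕ} (p : Perm (Fin m)) (i : Fin m) : Prop :=
  ∀ j : Fin m, p.SameCycle i j → i ≤ j

lemma isRep_iff_repOf_eq {m : ℕ} {p : Perm (Fin m)} {i : Fin m} :
    IsRep p i ↔ repOf p i = i := by
  constructor
  · intro h
    exact le_antisymm (repOf_le (Equiv.Perm.SameCycle.refl _ _)) (h _ (sameCycle_repOf p i))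
  · intro h j hj
    rw [← h]
    exact repOf_le hj

lemma isRep_repOf {m : ℕ} (p : Perm (Fin m)) (i : Fin m) : IsRep p (repOf p i) := by
  intro j hj
  exact repOf_le ((sameCycle_repOf p i).trans hj)

lemma repOf_repOf {m : ℕ} (p : Perm (Fin m)) (i : Fin m) :
    repOf p (repOf p i) = repOf p i :=
  isRep_iff_repOf_eq.mp (isRep_repOf p i)

lemma rep_eq_of_sameCycle {m : ℕ} {p : Perm (Fin m)} {i j : Fin m}
    (hi : IsRep p i) (hj : IsRep p j) (h : p.SameCycle i j) : i = j :=
  le_antisymm (hi _ h) (hj _ h.symm)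

lemma pow_apply_fixed {m : ℕ} {p : Perm (Fin m)} {i : Fin m} (h : p i = i) (t : ℕ) :
    (p ^ t) i = i := by
  induction t with
  | zero => rfl
  | succ s ih => rw [pow_succ', Equiv.Perm.mul_apply, ih, h]

lemma isRep_of_fixed {m : ℕ} {p : Perm (Fin m)} {i : Fin m} (h : p i = i) : IsRep p i := by
  intro j hj
  obtain ⟨t, -, rfl⟩ := hj.exists_pow_eq'
  rw [pow_apply_fixed h t]

-- cycProd normalization
lemma cycProd_eq_uRes (hk : 0 < k) {w : Perm (Fin (k * n))} (hw : IsBlockPerm k n w)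
    (i : Fin n) :
    cycProd k n hk w i
      = uRes hk (w ^ cycLen (pPerm k n hk w) i) (isBlockPerm_pow k n hw _) i := by
  have hb : Function.Bijective
      (uResFun k n hk (w ^ cycLen (pPerm k n hk w) i) i) :=
    uResFun_bijective hk (isBlockPerm_pow k n hw _) i
  rw [cycProd]
  exact dif_pos hb

end

-- ==== AUX1d ====
section
variable {k n : ℕ}

lemma grpConjPow {G : Type*} [Group G] (a b : G) (t : ℕ) :
    (a * b * a⁻¹) ^ t = a * b ^ t * a⁻¹ := by
  induction t with
  | zero => group
  | succ s ih => rw [pow_succ, ih, pow_succ]; group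

lemma isBlockPerm_conj {σ w : Perm (Fin (k * n))} (hσ : IsBlockPerm k n σ)
    (hw : IsBlockPerm k n w) : IsBlockPerm k n (σ * w * σ⁻¹) :=
  isBlockPerm_mul k n (isBlockPerm_mul k n hσ hw) (isBlockPerm_inv hσ)

lemma pPerm_conj (hk : 0 < k) {σ w : Perm (Fin (k * n))} (hσ : IsBlockPerm k n σ)
    (hw : IsBlockPerm k n w) :
    pPerm k n hk (σ * w * σ⁻¹) = pPerm k n hk σ * pPerm k n hk w * (pPerm k n hk σ)⁻¹ := by
  rw [pPerm_mul hk (isBlockPerm_mul k n hσ hw) (isBlockPerm_inv hσ),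
    pPerm_mul hk hσ hw, pPerm_inv hk hσ]

lemma cycLen_conj' (hk : 0 < k) {σ w : Perm (Fin (k * n))} (hσ : IsBlockPerm k n σ)
    (hw : IsBlockPerm k n w) (i : Fin n) :
    cycLen (pPerm k n hk (σ * w * σ⁻¹)) (pPerm k n hk σ i)
      = cycLen (pPerm k n hk w) i := by
  rw [pPerm_conj hk hσ hw]
  exact cycLen_conj _ _ _

lemma sameCycle_conj' (hk : 0 < k) {σ w : Perm (Fin (k * n))} (hσ : IsBlockPerm k n σ)
    (hw : IsBlockPerm k n w) (i j : Fin n) :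
    (pPerm k n hk (σ * w * σ⁻¹)).SameCycle (pPerm k n hk σ i) (pPerm k n hk σ j)
      ↔ (pPerm k n hk w).SameCycle i j := by
  rw [pPerm_conj hk hσ hw, Equiv.Perm.sameCycle_conj]
  simp

lemma cycProd_semiconj (hk : 0 < k) {σ w : Perm (Fin (k * n))} (hσ : IsBlockPerm k n σ)
    (hw : IsBlockPerm k n w) (i : Fin n) :
    cycProd k n hk (σ * w * σ⁻¹) (pPerm k n hk σ i) * uRes hk σ hσ i
      = uRes hk σ hσ i * cycProd k n hk w i := by
  set l := cycLen (pPerm k n hk w) i with hl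
  have hw2 : IsBlockPerm k n (σ * w * σ⁻¹) := isBlockPerm_conj hσ hw
  have hlen := cycLen_conj' hk hσ hw i
  have e1 : cycProd k n hk (σ * w * σ⁻¹) (pPerm k n hk σ i)
      = uRes hk ((σ * w * σ⁻¹) ^ l) (isBlockPerm_pow k n hw2 l) (pPerm k n hk σ i) := by
    rw [cycProd_eq_uRes hk hw2]
    exact uRes_congr hk (by rw [hlen]) _ _ _
  have e2 : cycProd k n hk w i
      = uRes hk (w ^ l) (isBlockPerm_pow k n hw l) i := cycProd_eq_uRes hk hw i
  rw [e1, e2]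
  have h3 : uRes hk ((σ * w * σ⁻¹) ^ l) (isBlockPerm_pow k n hw2 l) (pPerm k n hk σ i)
        * uRes hk σ hσ i
      = uRes hk ((σ * w * σ⁻¹) ^ l * σ)
          (isBlockPerm_mul k n (isBlockPerm_pow k n hw2 l) hσ) i :=
    (uRes_mul hk (isBlockPerm_pow k n hw2 l) hσ i).symm
  have h4 : (σ * w * σ⁻¹) ^ l * σ = σ * w ^ l := by
    rw [grpConjPow]; group
  have h5 : uRes hk ((σ * w * σ⁻¹) ^ l * σ)
        (isBlockPerm_mul k n (isBlockPerm_pow k n hw2 l) hσ) i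
      = uRes hk (σ * w ^ l) (isBlockPerm_mul k n hσ (isBlockPerm_pow k n hw l)) i :=
    uRes_congr hk h4 _ _ _
  have h6 : uRes hk (σ * w ^ l) (isBlockPerm_mul k n hσ (isBlockPerm_pow k n hw l)) i
      = uRes hk σ hσ (pPerm k n hk (w ^ l) i) * uRes hk (w ^ l) (isBlockPerm_pow k n hw l) i :=
    uRes_mul hk hσ (isBlockPerm_pow k n hw l) i
  have h7 : pPerm k n hk (w ^ l) i = i := by
    rw [pPerm_pow hk hw]
    exact pow_cycLen _ _
  rw [h3, h5, h6, h7]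

lemma cycProd_conj_parts (hk : 0 < k) {σ w : Perm (Fin (k * n))} (hσ : IsBlockPerm k n σ)
    (hw : IsBlockPerm k n w) (i : Fin n) :
    (cycProd k n hk (σ * w * σ⁻¹) (pPerm k n hk σ i)).partition.parts
      = (cycProd k n hk w i).partition.parts := by
  have hsc := cycProd_semiconj hk hσ hw i
  have hconj : IsConj (cycProd k n hk w i)
      (cycProd k n hk (σ * w * σ⁻¹) (pPerm k n hk σ i)) := by
    rw [isConj_iff]
    refine ⟨uRes hk σ hσ i, ?_⟩
    rw [← hsc]
    group
  rw [Equiv.Perm.partition_eq_of_isConj.mp hconj]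

lemma cycProd_congr (hk : 0 < k) {v w : Perm (Fin (k * n))} (h : v = w) (i : Fin n) :
    cycProd k n hk v i = cycProd k n hk w i := by subst h; rfl

lemma cycProd_parts_apply (hk : 0 < k) {w : Perm (Fin (k * n))} (hw : IsBlockPerm k n w)
    (i : Fin n) :
    (cycProd k n hk w (pPerm k n hk w i)).partition.parts
      = (cycProd k n hk w i).partition.parts := by
  have h := cycProd_conj_parts hk (σ := w) (w := w) hw hw i
  rwa [cycProd_congr hk (mul_inv_cancel_right w w) _] at h

lemma cycProd_parts_pow_apply (hk : 0 < k) {w : Perm (Fin (k * n))} (hw : IsBlockPerm k n w)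
    (i : Fin n) (t : ℕ) :
    (cycProd k n hk w ((pPerm k n hk w ^ t) i)).partition.parts
      = (cycProd k n hk w i).partition.parts := by
  induction t with
  | zero => simp
  | succ s ih =>
      rw [pow_succ', Equiv.Perm.mul_apply, cycProd_parts_apply hk hw, ih]

lemma cycProd_parts_sameCycle (hk : 0 < k) {w : Perm (Fin (k * n))} (hw : IsBlockPerm k n w)
    {i j : Fin n} (h : (pPerm k n hk w).SameCycle i j) :
    (cycProd k n hk w i).partition.parts = (cycProd k n hk w j).partition.parts := by
  obtain ⟨t, -, rfl⟩ := h.exists_pow_eq'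
  rw [cycProd_parts_pow_apply hk hw]

-- trivial blocks
lemma parts_one : ((1 : Perm (Fin k)).partition.parts) = Multiset.replicate k 1 := by
  rw [Equiv.Perm.parts_partition]
  simp [Equiv.Perm.cycleType_one, Equiv.Perm.support_one]

lemma eq_one_of_parts {g : Perm (Fin k)} (h : g.partition.parts = Multiset.replicate k 1) :
    g = 1 := by
  have hf := Equiv.Perm.filter_parts_partition_eq_cycleType (σ := g)
  rw [h] at hf
  have h0 : (Multiset.replicate k 1).filter (fun x => 2 ≤ x) = 0 :=
    Multiset.filter_eq_nil.mpr (fun a ha => by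
      rw [Multiset.eq_of_mem_replicate ha]; omega)
  rw [h0] at hf
  exact Equiv.Perm.cycleType_eq_zero.mp hf.symm

lemma trivial_iff (hk : 0 < k) {w : Perm (Fin (k * n))} (hw : IsBlockPerm k n w) (i : Fin n) :
    (cycLen (pPerm k n hk w) i = 1
        ∧ (cycProd k n hk w i).partition.parts = Multiset.replicate k 1)
      ↔ (pPerm k n hk w i = i ∧ uRes hk w hw i = 1) := by
  have hcyc : cycProd k n hk w i = uRes hk (w ^ cycLen (pPerm k n hk w) i)
      (isBlockPerm_pow k n hw _) i := cycProd_eq_uRes hk hw i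
  constructor
  · rintro ⟨h1, h2⟩
    refine ⟨cycLen_eq_one_iff.mp h1, ?_⟩
    have e : uRes hk (w ^ cycLen (pPerm k n hk w) i) (isBlockPerm_pow k n hw _) i
        = uRes hk w hw i := uRes_congr hk (by rw [h1, pow_one]) _ _ i
    rw [hcyc, e] at h2
    exact eq_one_of_parts h2
  · rintro ⟨h1, h2⟩
    have hl : cycLen (pPerm k n hk w) i = 1 := cycLen_eq_one_iff.mpr h1
    refine ⟨hl, ?_⟩
    have e : uRes hk (w ^ cycLen (pPerm k n hk w) i) (isBlockPerm_pow k n hw _) i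
        = uRes hk w hw i := uRes_congr hk (by rw [hl, pow_one]) _ _ i
    rw [hcyc, e, h2]
    exact parts_one

lemma mem_of_not_trivial (hk : 0 < k) {pr : Finset (Fin n) × Perm (Fin (k * n))}
    (hq : IsKPP k n pr) {i : Fin n}
    (h : ¬(pPerm k n hk pr.2 i = i ∧ uRes hk pr.2 hq.1 i = 1)) : i ∈ pr.1 := by
  by_contra hi
  apply h
  have hfix : ∀ a : Fin k, pr.2 (inBlock k n hk i a) = inBlock k n hk i a := by
    intro a
    apply hq.2
    rintro ⟨i', hi', hdiv⟩
    rw [inBlock_div] at hdiv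
    exact hi (Fin.ext hdiv ▸ hi')
  constructor
  · have h0 := apply_inBlock hk hq.1 i ⟨0, hk⟩
    rw [hfix ⟨0, hk⟩] at h0
    exact (inBlock_inj hk h0.symm).1
  · apply Equiv.ext; intro a
    have h0 := apply_inBlock hk hq.1 i a
    rw [hfix a] at h0
    exact ((inBlock_inj hk h0.symm).2).symm ▸ rfl

end

-- ==== AUX1e ====
section
variable {k n : ℕ}

open scoped Classical in
lemma tyFam_count (hk : 0 < k) (w : Perm (Fin (k * n))) (ρ : Nat.Partition k) (m : ℕ) :
    (tyFam k n hk w ρ).count m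
      = (Finset.univ.filter (fun i : Fin n =>
          (IsRep (pPerm k n hk w) i ∧
            (cycProd k n hk w i).partition.parts = ρ.parts) ∧
          m = cycLen (pPerm k n hk w) i)).card := by
  rw [tyFam, Multiset.count_map, ← Finset.filter_val, Finset.filter_filter]
  show (Finset.filter _ Finset.univ).card = (Finset.filter _ Finset.univ).card
  congr 1
  apply Finset.filter_congr
  intro i _
  exact Iff.rfl

lemma tyFam_eq_of_pointwise (hk : 0 < k) {w₁ w₂ : Perm (Fin (k * n))} (e : Perm (Fin n))
    (hlen : ∀ i, cycLen (pPerm k n hk w₂) (e i) = cycLen (pPerm k n hk w₁) i)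
    (hparts : ∀ i, (cycProd k n hk w₂ (e i)).partition.parts
        = (cycProd k n hk w₁ i).partition.parts)
    (hparts₁ : ∀ i j, (pPerm k n hk w₁).SameCycle i j →
        (cycProd k n hk w₁ i).partition.parts = (cycProd k n hk w₁ j).partition.parts)
    (hparts₂ : ∀ i j, (pPerm k n hk w₂).SameCycle i j →
        (cycProd k n hk w₂ i).partition.parts = (cycProd k n hk w₂ j).partition.parts)
    (hsc : ∀ i j, (pPerm k n hk w₂).SameCycle (e i) (e j)
        ↔ (pPerm k n hk w₁).SameCycle i j)
    (ρ : Nat.Partition k) : tyFam k n hk w₂ ρ = tyFam k n hk w₁ ρ := by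
  classical
  apply Multiset.ext.mpr
  intro m
  rw [tyFam_count hk w₂ ρ m, tyFam_count hk w₁ ρ m]
  symm
  apply Finset.card_bij (fun i _ => repOf (pPerm k n hk w₂) (e i))
  · intro a ha
    rw [Finset.mem_filter] at ha ⊢
    obtain ⟨-, ⟨harep, hap⟩, ham⟩ := ha
    refine ⟨Finset.mem_univ _, ⟨isRep_repOf _ _, ?_⟩, ?_⟩
    · rw [← hparts₂ _ _ (sameCycle_repOf _ (e a)), hparts a, hap]
    · rw [← cycLen_sameCycle (sameCycle_repOf _ (e a)), hlen a, ← ham]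
  · intro a ha a' ha' hfa
    rw [Finset.mem_filter] at ha ha'
    have hcyc : (pPerm k n hk w₂).SameCycle (e a) (e a') :=
      (sameCycle_repOf _ (e a)).trans (hfa ▸ (sameCycle_repOf _ (e a')).symm)
    exact rep_eq_of_sameCycle ha.2.1.1 ha'.2.1.1 ((hsc a a').mp hcyc)
  · intro b hb
    rw [Finset.mem_filter] at hb
    obtain ⟨-, ⟨hbrep, hbp⟩, hbm⟩ := hb
    refine ⟨repOf (pPerm k n hk w₁) (e.symm b), ?_, ?_⟩
    · rw [Finset.mem_filter]
      refine ⟨Finset.mem_univ _, ⟨isRep_repOf _ _, ?_⟩, ?_⟩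
      · rw [← hparts₁ _ _ (sameCycle_repOf _ (e.symm b)),
          ← hparts (e.symm b), Equiv.apply_symm_apply, hbp]
      · rw [← cycLen_sameCycle (sameCycle_repOf _ (e.symm b)), ← hlen (e.symm b),
          Equiv.apply_symm_apply, ← hbm]
    · have hcyc : (pPerm k n hk w₂).SameCycle b (e (repOf (pPerm k n hk w₁) (e.symm b))) := by
        have := (hsc (e.symm b) (repOf (pPerm k n hk w₁) (e.symm b))).mpr
          (sameCycle_repOf _ (e.symm b))
        rwa [Equiv.apply_symm_apply] at this
      rw [← repOf_eq_of_sameCycle hcyc, isRep_iff_repOf_eq.mp hbrep]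

lemma forward_direction (hk : 0 < k) (p q : KPP k n) (σ : Perm (Fin (k * n)))
    (hσ : IsBlockPerm k n σ) (hact : actKPP k n hk σ p.val = q.val) :
    p.val.1.card = q.val.1.card ∧
      ∀ ρ : Nat.Partition k, tyFam k n hk p.val.2 ρ = tyFam k n hk q.val.2 ρ := by
  have h1 : q.val.1 = p.val.1.image (fun i => pPerm k n hk σ i) :=
    (congrArg Prod.fst hact).symm
  have h2 : q.val.2 = σ * p.val.2 * σ⁻¹ := (congrArg Prod.snd hact).symm
  have hw₁ : IsBlockPerm k n p.val.2 := p.2.1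
  constructor
  · rw [h1, Finset.card_image_of_injective _ (Equiv.injective _)]
  · intro ρ
    symm
    rw [h2]
    exact tyFam_eq_of_pointwise hk (pPerm k n hk σ)
      (fun i => cycLen_conj' hk hσ hw₁ i)
      (fun i => cycProd_conj_parts hk hσ hw₁ i)
      (fun i j h => cycProd_parts_sameCycle hk hw₁ h)
      (fun i j h => cycProd_parts_sameCycle hk (isBlockPerm_conj hσ hw₁) h)
      (fun i j => sameCycle_conj' hk hσ hw₁ i j) ρ

end

-- ==== AUX1f ====
section
variable {m : ℕ} (p : Perm (Fin m))

lemma repOf_apply (i : Fin m) : repOf p (p i) = repOf p i :=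
  (repOf_eq_of_sameCycle ⟨1, by simp⟩).symm

lemma tI_exists (i : Fin m) :
    ∃ t, t < cycLen p (repOf p i) ∧ (p ^ t) (repOf p i) = i := by
  obtain ⟨t, -, ht⟩ := (sameCycle_repOf p i).symm.exists_pow_eq'
  exact ⟨t % cycLen p (repOf p i), Nat.mod_lt _ (cycLen_pos _ _),
    by rw [pow_mod_cycLen, ht]⟩

noncomputable def tI (i : Fin m) : ℕ := Classical.choose (tI_exists p i)

lemma tI_lt (i : Fin m) : tI p i < cycLen p (repOf p i) :=
  (Classical.choose_spec (tI_exists p i)).1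

lemma tI_spec (i : Fin m) : (p ^ tI p i) (repOf p i) = i :=
  (Classical.choose_spec (tI_exists p i)).2

lemma tI_unique {i : Fin m} {s : ℕ} (hs : s < cycLen p (repOf p i))
    (hspec : (p ^ s) (repOf p i) = i) : s = tI p i :=
  pow_inj_of_lt_cycLen hs (tI_lt p i) (hspec.trans (tI_spec p i).symm)

lemma tI_rep (i : Fin m) : tI p (repOf p i) = 0 := by
  refine (tI_unique p (i := repOf p i) (s := 0) ?_ ?_).symm
  · exact cycLen_pos _ _
  · rw [pow_zero, repOf_repOf]
    rfl

lemma tI_rep' {r : Fin m} (hr : IsRep p r) : tI p r = 0 := by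
  have := tI_rep p r
  rwa [isRep_iff_repOf_eq.mp hr] at this

lemma tI_succ {i : Fin m} (h : tI p i + 1 < cycLen p (repOf p i)) :
    tI p (p i) = tI p i + 1 := by
  refine (tI_unique p (i := p i) (s := tI p i + 1) ?_ ?_).symm
  · rwa [repOf_apply]
  · rw [repOf_apply, pow_succ', Equiv.Perm.mul_apply, tI_spec]

lemma tI_last {i : Fin m} (h : tI p i + 1 = cycLen p (repOf p i)) :
    p i = repOf p i := by
  have : (p ^ (tI p i + 1)) (repOf p i) = p i := by
    rw [pow_succ', Equiv.Perm.mul_apply, tI_spec]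
  rw [← this, h, pow_cycLen]

end

-- ==== AUX1g ====
section
variable {k n : ℕ}

noncomputable def mkPart (g : Perm (Fin k)) : Nat.Partition k where
  parts := g.partition.parts
  parts_pos := fun hi => g.partition.parts_pos hi
  parts_sum := by
    have h := g.partition.parts_sum
    simpa using h

lemma mkPart_parts (g : Perm (Fin k)) : (mkPart g).parts = g.partition.parts := rfl

open scoped Classical in
lemma exists_psi (hk : 0 < k) (pr₁ pr₂ : Finset (Fin n) × Perm (Fin (k * n)))
    (h₁ : IsKPP k n pr₁) (h₂ : IsKPP k n pr₂)
    (hcard : pr₁.1.card = pr₂.1.card)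
    (hty : ∀ ρ : Nat.Partition k, tyFam k n hk pr₁.2 ρ = tyFam k n hk pr₂.2 ρ) :
    ∃ ψ : Fin n → Fin n,
      (∀ r, IsRep (pPerm k n hk pr₁.2) r →
        IsRep (pPerm k n hk pr₂.2) (ψ r)
        ∧ cycLen (pPerm k n hk pr₂.2) (ψ r) = cycLen (pPerm k n hk pr₁.2) r
        ∧ (cycProd k n hk pr₂.2 (ψ r)).partition.parts
            = (cycProd k n hk pr₁.2 r).partition.parts
        ∧ (ψ r ∈ pr₂.1 ↔ r ∈ pr₁.1))
      ∧ ∀ r r', IsRep (pPerm k n hk pr₁.2) r → IsRep (pPerm k n hk pr₁.2) r' →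
          ψ r = ψ r' → r = r' := by
  classical
  obtain ⟨d₁, w₁⟩ := pr₁
  obtain ⟨d₂, w₂⟩ := pr₂
  replace hcard : d₁.card = d₂.card := hcard
  have hw₁ : IsBlockPerm k n w₁ := h₁.1
  have hw₂ : IsBlockPerm k n w₂ := h₂.1
  set P₁ := pPerm k n hk w₁ with hP₁
  set P₂ := pPerm k n hk w₂ with hP₂
  set R : Multiset ℕ := Multiset.replicate k 1 with hR
  have hN : ∀ (ρ : Nat.Partition k) (m : ℕ),
      (Finset.univ.filter (fun i : Fin n =>
        (IsRep P₁ i ∧ (cycProd k n hk w₁ i).partition.parts = ρ.parts)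
          ∧ m = cycLen P₁ i)).card
      = (Finset.univ.filter (fun i : Fin n =>
        (IsRep P₂ i ∧ (cycProd k n hk w₂ i).partition.parts = ρ.parts)
          ∧ m = cycLen P₂ i)).card := by
    intro ρ m
    have h := congrArg (Multiset.count m) (hty ρ)
    rwa [tyFam_count hk w₁ ρ m, tyFam_count hk w₂ ρ m] at h
  have htriv₁ : ∀ i, (P₁ i = i ∧ uRes hk w₁ hw₁ i = 1) ↔
      (IsRep P₁ i ∧ (cycProd k n hk w₁ i).partition.parts = R ∧ cycLen P₁ i = 1) := by
    intro i
    constructor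
    · intro h
      have hpair := (trivial_iff hk hw₁ i).mpr h
      exact ⟨isRep_of_fixed h.1, hpair.2, hpair.1⟩
    · intro h
      exact (trivial_iff hk hw₁ i).mp ⟨h.2.2, h.2.1⟩
  have htriv₂ : ∀ i, (P₂ i = i ∧ uRes hk w₂ hw₂ i = 1) ↔
      (IsRep P₂ i ∧ (cycProd k n hk w₂ i).partition.parts = R ∧ cycLen P₂ i = 1) := by
    intro i
    constructor
    · intro h
      have hpair := (trivial_iff hk hw₂ i).mpr h
      exact ⟨isRep_of_fixed h.1, hpair.2, hpair.1⟩
    · intro h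
      exact (trivial_iff hk hw₂ i).mp ⟨h.2.2, h.2.1⟩
  set T₁ : Finset (Fin n) :=
    Finset.univ.filter (fun i => P₁ i = i ∧ uRes hk w₁ hw₁ i = 1) with hT₁
  set T₂ : Finset (Fin n) :=
    Finset.univ.filter (fun i => P₂ i = i ∧ uRes hk w₂ hw₂ i = 1) with hT₂
  have hT : T₁.card = T₂.card := by
    have h := hN (onePartition k) 1
    have e₁ : T₁ = Finset.univ.filter (fun i =>
        (IsRep P₁ i ∧ (cycProd k n hk w₁ i).partition.parts = (onePartition k).parts)
          ∧ 1 = cycLen P₁ i) := by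
      apply Finset.filter_congr
      intro i _
      rw [htriv₁ i]
      exact ⟨fun ⟨a, b, c⟩ => ⟨⟨a, b⟩, c.symm⟩, fun ⟨⟨a, b⟩, c⟩ => ⟨a, b, c.symm⟩⟩
    have e₂ : T₂ = Finset.univ.filter (fun i =>
        (IsRep P₂ i ∧ (cycProd k n hk w₂ i).partition.parts = (onePartition k).parts)
          ∧ 1 = cycLen P₂ i) := by
      apply Finset.filter_congr
      intro i _
      rw [htriv₂ i]
      exact ⟨fun ⟨a, b, c⟩ => ⟨⟨a, b⟩, c.symm⟩, fun ⟨⟨a, b⟩, c⟩ => ⟨a, b, c.symm⟩⟩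
    rw [e₁, e₂]
    exact h
  -- the split cardinalities
  have hnontriv₁ : d₁.filter (fun i => ¬(P₁ i = i ∧ uRes hk w₁ hw₁ i = 1))
      = Finset.univ.filter (fun i => ¬(P₁ i = i ∧ uRes hk w₁ hw₁ i = 1)) := by
    ext i
    simp only [Finset.mem_filter, Finset.mem_univ, true_and]
    exact ⟨fun h => h.2, fun h => ⟨mem_of_not_trivial hk h₁ h, h⟩⟩
  have hnontriv₂ : d₂.filter (fun i => ¬(P₂ i = i ∧ uRes hk w₂ hw₂ i = 1))
      = Finset.univ.filter (fun i => ¬(P₂ i = i ∧ uRes hk w₂ hw₂ i = 1)) := by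
    ext i
    simp only [Finset.mem_filter, Finset.mem_univ, true_and]
    exact ⟨fun h => h.2, fun h => ⟨mem_of_not_trivial hk h₂ h, h⟩⟩
  have hd₁ : d₁.filter (fun i => (P₁ i = i ∧ uRes hk w₁ hw₁ i = 1))
      = T₁.filter (fun i => i ∈ d₁) := by
    ext i
    simp only [hT₁, Finset.mem_filter, Finset.mem_univ, true_and]
    tauto
  have hd₂ : d₂.filter (fun i => (P₂ i = i ∧ uRes hk w₂ hw₂ i = 1))
      = T₂.filter (fun i => i ∈ d₂) := by
    ext i
    simp only [hT₂, Finset.mem_filter, Finset.mem_univ, true_and]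
    tauto
  have hsum₁ := Finset.card_filter_add_card_filter_not
      (s := d₁) (p := fun i => (P₁ i = i ∧ uRes hk w₁ hw₁ i = 1))
  have hsum₂ := Finset.card_filter_add_card_filter_not
      (s := d₂) (p := fun i => (P₂ i = i ∧ uRes hk w₂ hw₂ i = 1))
  have huniv₁ := Finset.card_filter_add_card_filter_not
      (s := (Finset.univ : Finset (Fin n)))
      (p := fun i => (P₁ i = i ∧ uRes hk w₁ hw₁ i = 1))
  have huniv₂ := Finset.card_filter_add_card_filter_not
      (s := (Finset.univ : Finset (Fin n)))
      (p := fun i => (P₂ i = i ∧ uRes hk w₂ hw₂ i = 1))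
  have hTin : (T₁.filter (fun i => i ∈ d₁)).card = (T₂.filter (fun i => i ∈ d₂)).card := by
    rw [← hd₁, ← hd₂]
    rw [hnontriv₁] at hsum₁
    rw [hnontriv₂] at hsum₂
    rw [← hT₁] at huniv₁
    rw [← hT₂] at huniv₂
    omega
  have hTout : (T₁.filter (fun i => i ∉ d₁)).card = (T₂.filter (fun i => i ∉ d₂)).card := by
    have hs₁ := Finset.card_filter_add_card_filter_not
      (s := T₁) (p := fun i => i ∈ d₁)
    have hs₂ := Finset.card_filter_add_card_filter_not
      (s := T₂) (p := fun i => i ∈ d₂)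
    omega
  -- class sets
  set Cl₁ : Fin n → ℕ × Multiset ℕ × Bool := fun i =>
    (cycLen P₁ i, (cycProd k n hk w₁ i).partition.parts, decide (i ∈ d₁)) with hCl₁
  set Cl₂ : Fin n → ℕ × Multiset ℕ × Bool := fun i =>
    (cycLen P₂ i, (cycProd k n hk w₂ i).partition.parts, decide (i ∈ d₂)) with hCl₂
  set S₁ : ℕ × Multiset ℕ × Bool → Finset (Fin n) := fun c =>
    Finset.univ.filter (fun r => IsRep P₁ r ∧ Cl₁ r = c) with hS₁
  set S₂ : ℕ × Multiset ℕ × Bool → Finset (Fin n) := fun c =>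
    Finset.univ.filter (fun r => IsRep P₂ r ∧ Cl₂ r = c) with hS₂
  have hcount : ∀ c, (S₁ c).card = (S₂ c).card := by
    rintro ⟨m, P, b⟩
    by_cases hc : m = 1 ∧ P = R
    · obtain ⟨rfl, rfl⟩ := hc
      cases b
      · -- trivial, not in d
        have e₁ : S₁ (1, R, false) = T₁.filter (fun i => i ∉ d₁) := by
          ext i
          simp only [hS₁, hT₁, Finset.mem_filter, Finset.mem_univ, true_and,
            Finset.filter_filter]
          rw [hCl₁]
          simp only [Prod.mk.injEq, decide_eq_false_iff_not]
          constructor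
          · rintro ⟨hrep, hlen, hparts, hd⟩
            exact ⟨(htriv₁ i).mpr ⟨hrep, hparts, hlen⟩, hd⟩
          · rintro ⟨htr, hd⟩
            obtain ⟨hrep, hparts, hlen⟩ := (htriv₁ i).mp htr
            exact ⟨hrep, hlen, hparts, hd⟩
        have e₂ : S₂ (1, R, false) = T₂.filter (fun i => i ∉ d₂) := by
          ext i
          simp only [hS₂, hT₂, Finset.mem_filter, Finset.mem_univ, true_and,
            Finset.filter_filter]
          rw [hCl₂]
          simp only [Prod.mk.injEq, decide_eq_false_iff_not]
          constructor
          · rintro ⟨hrep, hlen, hparts, hd⟩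
            exact ⟨(htriv₂ i).mpr ⟨hrep, hparts, hlen⟩, hd⟩
          · rintro ⟨htr, hd⟩
            obtain ⟨hrep, hparts, hlen⟩ := (htriv₂ i).mp htr
            exact ⟨hrep, hlen, hparts, hd⟩
        rw [e₁, e₂]
        exact hTout
      · -- trivial, in d
        have e₁ : S₁ (1, R, true) = T₁.filter (fun i => i ∈ d₁) := by
          ext i
          simp only [hS₁, hT₁, Finset.mem_filter, Finset.mem_univ, true_and,
            Finset.filter_filter]
          rw [hCl₁]
          simp only [Prod.mk.injEq, decide_eq_true_eq]
          constructor
          · rintro ⟨hrep, hlen, hparts, hd⟩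
            exact ⟨(htriv₁ i).mpr ⟨hrep, hparts, hlen⟩, hd⟩
          · rintro ⟨htr, hd⟩
            obtain ⟨hrep, hparts, hlen⟩ := (htriv₁ i).mp htr
            exact ⟨hrep, hlen, hparts, hd⟩
        have e₂ : S₂ (1, R, true) = T₂.filter (fun i => i ∈ d₂) := by
          ext i
          simp only [hS₂, hT₂, Finset.mem_filter, Finset.mem_univ, true_and,
            Finset.filter_filter]
          rw [hCl₂]
          simp only [Prod.mk.injEq, decide_eq_true_eq]
          constructor
          · rintro ⟨hrep, hlen, hparts, hd⟩
            exact ⟨(htriv₂ i).mpr ⟨hrep, hparts, hlen⟩, hd⟩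
          · rintro ⟨htr, hd⟩
            obtain ⟨hrep, hparts, hlen⟩ := (htriv₂ i).mp htr
            exact ⟨hrep, hlen, hparts, hd⟩
        rw [e₁, e₂]
        exact hTin
    · cases b
      · -- nontrivial class, bool false: both empty
        have e₁ : S₁ (m, P, false) = ∅ := by
          apply Finset.eq_empty_of_forall_notMem
          intro i hi
          simp only [hS₁, Finset.mem_filter, Finset.mem_univ, true_and] at hi
          obtain ⟨hrep, hcl⟩ := hi
          rw [hCl₁] at hcl
          simp only [Prod.mk.injEq, decide_eq_false_iff_not] at hcl
          obtain ⟨hlen, hparts, hd⟩ := hcl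
          have htr : P₁ i = i ∧ uRes hk w₁ hw₁ i = 1 := by
            by_contra hcon
            exact hd (mem_of_not_trivial hk h₁ hcon)
          obtain ⟨-, hparts', hlen'⟩ := (htriv₁ i).mp htr
          exact hc ⟨hlen ▸ hlen', hparts ▸ hparts'⟩
        have e₂ : S₂ (m, P, false) = ∅ := by
          apply Finset.eq_empty_of_forall_notMem
          intro i hi
          simp only [hS₂, Finset.mem_filter, Finset.mem_univ, true_and] at hi
          obtain ⟨hrep, hcl⟩ := hi
          rw [hCl₂] at hcl
          simp only [Prod.mk.injEq, decide_eq_false_iff_not] at hcl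
          obtain ⟨hlen, hparts, hd⟩ := hcl
          have htr : P₂ i = i ∧ uRes hk w₂ hw₂ i = 1 := by
            by_contra hcon
            exact hd (mem_of_not_trivial hk h₂ hcon)
          obtain ⟨-, hparts', hlen'⟩ := (htriv₂ i).mp htr
          exact hc ⟨hlen ▸ hlen', hparts ▸ hparts'⟩
        rw [e₁, e₂]
      · -- nontrivial class, bool true
        have e₁ : S₁ (m, P, true) = Finset.univ.filter (fun i =>
            (IsRep P₁ i ∧ (cycProd k n hk w₁ i).partition.parts = P)
              ∧ m = cycLen P₁ i) := by
          ext i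
          simp only [hS₁, Finset.mem_filter, Finset.mem_univ, true_and]
          rw [hCl₁]
          simp only [Prod.mk.injEq, decide_eq_true_eq]
          constructor
          · rintro ⟨hrep, hlen, hparts, hd⟩
            exact ⟨⟨hrep, hparts⟩, hlen.symm⟩
          · rintro ⟨⟨hrep, hparts⟩, hlen⟩
            refine ⟨hrep, hlen.symm, hparts, ?_⟩
            by_contra hd
            have htr : P₁ i = i ∧ uRes hk w₁ hw₁ i = 1 := by
              by_contra hcon
              exact hd (mem_of_not_trivial hk h₁ hcon)
            obtain ⟨-, hparts', hlen'⟩ := (htriv₁ i).mp htr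
            exact hc ⟨hlen ▸ hlen'.symm ▸ rfl, hparts ▸ hparts'⟩
        have e₂ : S₂ (m, P, true) = Finset.univ.filter (fun i =>
            (IsRep P₂ i ∧ (cycProd k n hk w₂ i).partition.parts = P)
              ∧ m = cycLen P₂ i) := by
          ext i
          simp only [hS₂, Finset.mem_filter, Finset.mem_univ, true_and]
          rw [hCl₂]
          simp only [Prod.mk.injEq, decide_eq_true_eq]
          constructor
          · rintro ⟨hrep, hlen, hparts, hd⟩
            exact ⟨⟨hrep, hparts⟩, hlen.symm⟩
          · rintro ⟨⟨hrep, hparts⟩, hlen⟩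
            refine ⟨hrep, hlen.symm, hparts, ?_⟩
            by_contra hd
            have htr : P₂ i = i ∧ uRes hk w₂ hw₂ i = 1 := by
              by_contra hcon
              exact hd (mem_of_not_trivial hk h₂ hcon)
            obtain ⟨-, hparts', hlen'⟩ := (htriv₂ i).mp htr
            exact hc ⟨hlen ▸ hlen'.symm ▸ rfl, hparts ▸ hparts'⟩
        rw [e₁, e₂]
        rcases Finset.eq_empty_or_nonempty (Finset.univ.filter (fun i =>
            (IsRep P₁ i ∧ (cycProd k n hk w₁ i).partition.parts = P)
              ∧ m = cycLen P₁ i)) with hA | ⟨i, hi⟩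
        · rcases Finset.eq_empty_or_nonempty (Finset.univ.filter (fun i =>
              (IsRep P₂ i ∧ (cycProd k n hk w₂ i).partition.parts = P)
                ∧ m = cycLen P₂ i)) with hA' | ⟨i, hi⟩
          · rw [hA, hA']
          · simp only [Finset.mem_filter] at hi
            have hgp : (mkPart (cycProd k n hk w₂ i)).parts = P := hi.2.1.2
            have h := hN (mkPart (cycProd k n hk w₂ i)) m
            rwa [hgp] at h
        · simp only [Finset.mem_filter] at hi
          have hgp : (mkPart (cycProd k n hk w₁ i)).parts = P := hi.2.1.2
          have h := hN (mkPart (cycProd k n hk w₁ i)) m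
          rwa [hgp] at h
  -- build ψ from the per-class equivs
  set E : ∀ c : ℕ × Multiset ℕ × Bool, {x // x ∈ S₁ c} ≃ {x // x ∈ S₂ c} :=
    fun c => Finset.equivOfCardEq (hcount c) with hE
  have memS₁ : ∀ r, IsRep P₁ r → r ∈ S₁ (Cl₁ r) := by
    intro r h
    simp only [hS₁, Finset.mem_filter, Finset.mem_univ, true_and]
    exact ⟨h, trivial⟩
  set ψ : Fin n → Fin n := fun r =>
    if h : IsRep P₁ r then ((E (Cl₁ r)) ⟨r, memS₁ r h⟩ : Fin n) else r with hψ
  have hmemS₂ : ∀ r (h : IsRep P₁ r), ψ r ∈ S₂ (Cl₁ r) := by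
    intro r h
    rw [hψ]
    simp only [dif_pos h]
    exact ((E (Cl₁ r)) ⟨r, memS₁ r h⟩).2
  have hclass : ∀ r (h : IsRep P₁ r), IsRep P₂ (ψ r) ∧ Cl₂ (ψ r) = Cl₁ r := by
    intro r h
    have := hmemS₂ r h
    simp only [hS₂, Finset.mem_filter, Finset.mem_univ, true_and] at this
    exact this
  have ψ_eq : ∀ r (h : IsRep P₁ r) (c : ℕ × Multiset ℕ × Bool) (hc : Cl₁ r = c)
      (hm : r ∈ S₁ c), ψ r = ((E c) ⟨r, hm⟩ : Fin n) := by
    intro r h c hc hm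
    subst hc
    rw [hψ]
    simp only [dif_pos h]
  refine ⟨ψ, ?_, ?_⟩
  · intro r h
    obtain ⟨hrep2, hcl2⟩ := hclass r h
    rw [hCl₂, hCl₁] at hcl2
    simp only [Prod.mk.injEq] at hcl2
    obtain ⟨hlen, hparts, hdec⟩ := hcl2
    exact ⟨hrep2, hlen, hparts, decide_eq_decide.mp hdec⟩
  · intro r r' h h' heq
    have hc1 := (hclass r h).2
    have hc1' := (hclass r' h').2
    have hcc : Cl₁ r = Cl₁ r' := by
      rw [← hc1, ← hc1', heq]
    have e1 := ψ_eq r h (Cl₁ r) rfl (memS₁ r h)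
    have e2 := ψ_eq r' h' (Cl₁ r) hcc.symm (by
      have := memS₁ r' h'
      rwa [← hcc] at this)
    rw [e1, e2] at heq
    have := (E (Cl₁ r)).injective (Subtype.ext heq)
    exact congrArg Subtype.val this

end

-- ==== AUX1h ====
section
variable {k n : ℕ}

@[simp] lemma blockOf_inBlock (hk : 0 < k) (i : Fin n) (a : Fin k) :
    blockOf hk (inBlock k n hk i a) = i := Fin.ext (inBlock_div hk i a)

@[simp] lemma offOf_inBlock (hk : 0 < k) (i : Fin n) (a : Fin k) :
    offOf hk (inBlock k n hk i a) = a := Fin.ext (inBlock_mod hk i a)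

lemma uRes_pow_succ (hk : 0 < k) {w : Perm (Fin (k * n))} (hw : IsBlockPerm k n w)
    (t : ℕ) (r : Fin n) :
    uRes hk (w ^ (t + 1)) (isBlockPerm_pow k n hw _) r
      = uRes hk w hw ((pPerm k n hk w ^ t) r)
        * uRes hk (w ^ t) (isBlockPerm_pow k n hw _) r := by
  rw [uRes_congr hk (pow_succ' w t) (isBlockPerm_pow k n hw _)
    (isBlockPerm_mul k n hw (isBlockPerm_pow k n hw t)) r,
    uRes_mul hk hw (isBlockPerm_pow k n hw t) r, pPerm_pow hk hw]

lemma uRes_pow_zero (hk : 0 < k) {w : Perm (Fin (k * n))} (hw : IsBlockPerm k n w)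
    (r : Fin n) :
    uRes hk (w ^ 0) (isBlockPerm_pow k n hw _) r = 1 := by
  rw [uRes_congr hk (pow_zero w) (isBlockPerm_pow k n hw _) (isBlockPerm_one k n) r]
  exact uRes_one hk _ r

open scoped Classical in
lemma backward_direction (hk : 0 < k) (p q : KPP k n)
    (hcard : p.val.1.card = q.val.1.card)
    (hty : ∀ ρ : Nat.Partition k, tyFam k n hk p.val.2 ρ = tyFam k n hk q.val.2 ρ) :
    ∃ σ : Perm (Fin (k * n)), IsBlockPerm k n σ ∧ actKPP k n hk σ p.val = q.val := by
  classical
  obtain ⟨ψ, hψprops, hψinj⟩ := exists_psi hk p.val q.val p.2 q.2 hcard hty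
  set d₁ := p.val.1 with hd₁
  set w₁ := p.val.2 with hw₁def
  set d₂ := q.val.1 with hd₂
  set w₂ := q.val.2 with hw₂def
  have hw₁ : IsBlockPerm k n w₁ := p.2.1
  have hw₂ : IsBlockPerm k n w₂ := q.2.1
  set P₁ := pPerm k n hk w₁ with hP₁
  set P₂ := pPerm k n hk w₂ with hP₂
  have hψrep : ∀ r, IsRep P₁ r → IsRep P₂ (ψ r) := fun r h => (hψprops r h).1
  have hψlen : ∀ r, IsRep P₁ r → cycLen P₂ (ψ r) = cycLen P₁ r := fun r h =>
    (hψprops r h).2.1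
  have hconj : ∀ r, IsRep P₁ r → ∃ c : Perm (Fin k),
      c * cycProd k n hk w₁ r * c⁻¹ = cycProd k n hk w₂ (ψ r) := by
    intro r h
    have hparts := (hψprops r h).2.2.1
    have hpart_eq : (cycProd k n hk w₁ r).partition
        = (cycProd k n hk w₂ (ψ r)).partition := by
      rw [Nat.Partition.ext_iff]
      exact hparts.symm
    exact isConj_iff.mp (Equiv.Perm.partition_eq_of_isConj.mpr hpart_eq)
  set cfun : Fin n → Perm (Fin k) := fun r =>
    if h : IsRep P₁ r then Classical.choose (hconj r h) else 1 with hcfun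
  have hcspec : ∀ r (h : IsRep P₁ r),
      cfun r * cycProd k n hk w₁ r * (cfun r)⁻¹ = cycProd k n hk w₂ (ψ r) := by
    intro r h
    rw [hcfun]
    simp only [dif_pos h]
    exact Classical.choose_spec (hconj r h)
  set φ : Fin n → Fin n := fun i => (P₂ ^ (tI P₁ i)) (ψ (repOf P₁ i)) with hφ
  set τ : Fin n → Perm (Fin k) := fun i =>
    uRes hk (w₂ ^ tI P₁ i) (isBlockPerm_pow k n hw₂ _) (ψ (repOf P₁ i))
      * cfun (repOf P₁ i)
      * (uRes hk (w₁ ^ tI P₁ i) (isBlockPerm_pow k n hw₁ _) (repOf P₁ i))⁻¹ with hτ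
  have hkey : ∀ i, φ (P₁ i) = P₂ (φ i) := by
    intro i
    have hrrep : IsRep P₁ (repOf P₁ i) := isRep_repOf _ _
    have hrap : repOf P₁ (P₁ i) = repOf P₁ i := repOf_apply P₁ i
    rcases lt_or_eq_of_le (Nat.succ_le_of_lt (tI_lt P₁ i)) with hlt | heq
    · have ht' : tI P₁ (P₁ i) = tI P₁ i + 1 := tI_succ P₁ hlt
      show (P₂ ^ (tI P₁ (P₁ i))) (ψ (repOf P₁ (P₁ i)))
        = P₂ ((P₂ ^ tI P₁ i) (ψ (repOf P₁ i)))
      rw [hrap, ht', pow_succ', Equiv.Perm.mul_apply]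
    · replace heq : tI P₁ i + 1 = cycLen P₁ (repOf P₁ i) := heq
      have hlast : P₁ i = repOf P₁ i := tI_last P₁ heq
      show (P₂ ^ (tI P₁ (P₁ i))) (ψ (repOf P₁ (P₁ i)))
        = P₂ ((P₂ ^ tI P₁ i) (ψ (repOf P₁ i)))
      rw [hlast, isRep_iff_repOf_eq.mp hrrep, tI_rep' P₁ hrrep, pow_zero]
      have hr2 : (P₂ ^ (tI P₁ i + 1)) (ψ (repOf P₁ i)) = ψ (repOf P₁ i) := by
        rw [heq, ← hψlen _ hrrep]
        exact pow_cycLen P₂ _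
      rw [← Equiv.Perm.mul_apply, ← pow_succ', hr2]
      exact Equiv.Perm.one_apply _
  have hkey2 : ∀ i, τ (P₁ i) * uRes hk w₁ hw₁ i = uRes hk w₂ hw₂ (φ i) * τ i := by
    intro i
    have hrrep : IsRep P₁ (repOf P₁ i) := isRep_repOf _ _
    have hrap : repOf P₁ (P₁ i) = repOf P₁ i := repOf_apply P₁ i
    rcases lt_or_eq_of_le (Nat.succ_le_of_lt (tI_lt P₁ i)) with hlt | heq
    · have ht' : tI P₁ (P₁ i) = tI P₁ i + 1 := tI_succ P₁ hlt
      show (uRes hk (w₂ ^ tI P₁ (P₁ i)) (isBlockPerm_pow k n hw₂ _) (ψ (repOf P₁ (P₁ i)))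
          * cfun (repOf P₁ (P₁ i))
          * (uRes hk (w₁ ^ tI P₁ (P₁ i)) (isBlockPerm_pow k n hw₁ _) (repOf P₁ (P₁ i)))⁻¹)
          * uRes hk w₁ hw₁ i
        = uRes hk w₂ hw₂ ((P₂ ^ tI P₁ i) (ψ (repOf P₁ i)))
          * (uRes hk (w₂ ^ tI P₁ i) (isBlockPerm_pow k n hw₂ _) (ψ (repOf P₁ i))
            * cfun (repOf P₁ i)
            * (uRes hk (w₁ ^ tI P₁ i) (isBlockPerm_pow k n hw₁ _) (repOf P₁ i))⁻¹)
      rw [hrap, ht', uRes_pow_succ hk hw₂, uRes_pow_succ hk hw₁, ← hP₁, ← hP₂,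
        tI_spec P₁ i]
      group
    · replace heq : tI P₁ i + 1 = cycLen P₁ (repOf P₁ i) := heq
      have hlast : P₁ i = repOf P₁ i := tI_last P₁ heq
      show (uRes hk (w₂ ^ tI P₁ (P₁ i)) (isBlockPerm_pow k n hw₂ _) (ψ (repOf P₁ (P₁ i)))
          * cfun (repOf P₁ (P₁ i))
          * (uRes hk (w₁ ^ tI P₁ (P₁ i)) (isBlockPerm_pow k n hw₁ _) (repOf P₁ (P₁ i)))⁻¹)
          * uRes hk w₁ hw₁ i
        = uRes hk w₂ hw₂ ((P₂ ^ tI P₁ i) (ψ (repOf P₁ i)))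
          * (uRes hk (w₂ ^ tI P₁ i) (isBlockPerm_pow k n hw₂ _) (ψ (repOf P₁ i))
            * cfun (repOf P₁ i)
            * (uRes hk (w₁ ^ tI P₁ i) (isBlockPerm_pow k n hw₁ _) (repOf P₁ i))⁻¹)
      rw [hlast, isRep_iff_repOf_eq.mp hrrep, tI_rep' P₁ hrrep,
        uRes_pow_zero hk hw₂, uRes_pow_zero hk hw₁]
      have hA := uRes_pow_succ hk hw₂ (tI P₁ i) (ψ (repOf P₁ i))
      have hB := uRes_pow_succ hk hw₁ (tI P₁ i) (repOf P₁ i)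
      rw [← hP₂] at hA
      rw [← hP₁, tI_spec P₁ i] at hB
      have e1 : uRes hk (w₁ ^ cycLen (pPerm k n hk w₁) (repOf P₁ i))
            (isBlockPerm_pow k n hw₁ _) (repOf P₁ i)
          = uRes hk (w₁ ^ (tI P₁ i + 1)) (isBlockPerm_pow k n hw₁ _) (repOf P₁ i) :=
        uRes_congr hk (by rw [← hP₁, ← heq]) _ _ _
      have e2 : uRes hk (w₂ ^ cycLen (pPerm k n hk w₂) (ψ (repOf P₁ i)))
            (isBlockPerm_pow k n hw₂ _) (ψ (repOf P₁ i))
          = uRes hk (w₂ ^ (tI P₁ i + 1)) (isBlockPerm_pow k n hw₂ _) (ψ (repOf P₁ i)) :=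
        uRes_congr hk (by rw [← hP₂, hψlen _ hrrep, ← heq]) _ _ _
      have hC : uRes hk (w₂ ^ (tI P₁ i + 1)) (isBlockPerm_pow k n hw₂ _) (ψ (repOf P₁ i))
          = cfun (repOf P₁ i)
            * uRes hk (w₁ ^ (tI P₁ i + 1)) (isBlockPerm_pow k n hw₁ _) (repOf P₁ i)
            * (cfun (repOf P₁ i))⁻¹ := by
        have h1 := hcspec (repOf P₁ i) hrrep
        rw [cycProd_eq_uRes hk hw₁, cycProd_eq_uRes hk hw₂, e1, e2] at h1
        exact h1.symm
      have hA' : uRes hk w₂ hw₂ ((P₂ ^ tI P₁ i) (ψ (repOf P₁ i)))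
          = uRes hk (w₂ ^ (tI P₁ i + 1)) (isBlockPerm_pow k n hw₂ _) (ψ (repOf P₁ i))
            * (uRes hk (w₂ ^ tI P₁ i) (isBlockPerm_pow k n hw₂ _) (ψ (repOf P₁ i)))⁻¹ := by
        rw [hA]
        group
      rw [hA', hC, hB]
      group
  -- injectivity of φ
  have hφinj : Function.Injective φ := by
    intro i i' hφeq
    have hrrep : IsRep P₁ (repOf P₁ i) := isRep_repOf _ _
    have hrrep' : IsRep P₁ (repOf P₁ i') := isRep_repOf _ _
    have hsc1 : P₂.SameCycle (ψ (repOf P₁ i)) (φ i) :=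
      ⟨tI P₁ i, by rw [zpow_natCast]⟩
    have hsc2 : P₂.SameCycle (ψ (repOf P₁ i')) (φ i') :=
      ⟨tI P₁ i', by rw [zpow_natCast]⟩
    have hsame : P₂.SameCycle (ψ (repOf P₁ i)) (ψ (repOf P₁ i')) :=
      hsc1.trans (hφeq ▸ hsc2.symm)
    have hψeq : ψ (repOf P₁ i) = ψ (repOf P₁ i') :=
      rep_eq_of_sameCycle (hψrep _ hrrep) (hψrep _ hrrep') hsame
    have hreq : repOf P₁ i = repOf P₁ i' := hψinj _ _ hrrep hrrep' hψeq
    have hteq : tI P₁ i = tI P₁ i' := by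
      apply pow_inj_of_lt_cycLen (p := P₂) (i := ψ (repOf P₁ i))
      · rw [hψlen _ hrrep]
        exact tI_lt P₁ i
      · rw [hreq, hψlen _ hrrep']
        exact tI_lt P₁ i'
      · calc (P₂ ^ tI P₁ i) (ψ (repOf P₁ i)) = φ i := rfl
          _ = φ i' := hφeq
          _ = (P₂ ^ tI P₁ i') (ψ (repOf P₁ i')) := rfl
          _ = (P₂ ^ tI P₁ i') (ψ (repOf P₁ i)) := by rw [hreq]
    rw [← tI_spec P₁ i, ← tI_spec P₁ i', hreq, hteq]
  -- build σ
  set σf : Fin (k * n) → Fin (k * n) := fun x =>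
    inBlock k n hk (φ (blockOf hk x)) (τ (blockOf hk x) (offOf hk x)) with hσf
  have hσinj : Function.Injective σf := by
    intro x y hxy
    rw [hσf] at hxy
    simp only at hxy
    obtain ⟨hb, ho⟩ := inBlock_inj hk hxy
    have hb' : blockOf hk x = blockOf hk y := hφinj hb
    have ho' : offOf hk x = offOf hk y := by
      rw [hb'] at ho
      exact (τ (blockOf hk y)).injective ho
    calc x = inBlock k n hk (blockOf hk x) (offOf hk x) := (inBlock_blockOf hk x).symm
      _ = inBlock k n hk (blockOf hk y) (offOf hk y) := by rw [hb', ho']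
      _ = y := inBlock_blockOf hk y
  set σ : Perm (Fin (k * n)) :=
    Equiv.ofBijective σf (Finite.injective_iff_bijective.mp hσinj) with hσ
  have hσapp : ∀ (i : Fin n) (a : Fin k),
      σ (inBlock k n hk i a) = inBlock k n hk (φ i) (τ i a) := by
    intro i a
    show σf (inBlock k n hk i a) = _
    rw [hσf]
    simp only [blockOf_inBlock, offOf_inBlock]
  have hσblock : IsBlockPerm k n σ := by
    intro i
    refine ⟨φ i, ?_⟩
    ext y
    constructor
    · intro hy
      obtain ⟨x, hx, rfl⟩ := Finset.mem_image.mp hy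
      have hbx : blockOf hk x = i := Fin.ext (mem_pk.mp hx)
      rw [← inBlock_blockOf hk x, hbx, hσapp]
      exact inBlock_mem_pk hk _ _
    · intro hy
      have hby : blockOf hk y = φ i := Fin.ext (mem_pk.mp hy)
      apply Finset.mem_image.mpr
      refine ⟨inBlock k n hk i ((τ i)⁻¹ (offOf hk y)), inBlock_mem_pk hk _ _, ?_⟩
      rw [hσapp, Equiv.Perm.inv_def, Equiv.apply_symm_apply, ← hby, inBlock_blockOf]
  have hpσ : ∀ i, pPerm k n hk σ i = φ i := by
    intro i
    rw [pPerm_apply hk hσblock]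
    apply Fin.ext
    show ((σ (elemIn k n hk i)) : ℕ) / k = ((φ i : Fin n) : ℕ)
    rw [elemIn_eq hk, hσapp, inBlock_div]
  have hptw : σ * w₁ = w₂ * σ := by
    apply Equiv.ext
    intro x
    show σ (w₁ x) = w₂ (σ x)
    conv_lhs => rw [← inBlock_blockOf hk x]
    conv_rhs => rw [← inBlock_blockOf hk x]
    rw [apply_inBlock hk hw₁, hσapp, hσapp, apply_inBlock hk hw₂, ← hP₁, ← hP₂, hkey]
    congr 1
    have h2 := congrArg (fun g : Perm (Fin k) => g (offOf hk x)) (hkey2 (blockOf hk x))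
    exact h2
  have hconj_eq : σ * w₁ * σ⁻¹ = w₂ := by rw [hptw, mul_inv_cancel_right]
  have himg : d₁.image (fun i => pPerm k n hk σ i) = d₂ := by
    have hcongr : d₁.image (fun i => pPerm k n hk σ i) = d₁.image φ :=
      Finset.image_congr (fun i _ => hpσ i)
    rw [hcongr]
    apply Finset.eq_of_subset_of_card_le
    · intro y hy
      obtain ⟨i, hi, rfl⟩ := Finset.mem_image.mp hy
      by_cases htr : P₁ i = i ∧ uRes hk w₁ hw₁ i = 1
      · have hrep : IsRep P₁ i := isRep_of_fixed htr.1
        have hφψ : φ i = ψ i := by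
          show (P₂ ^ tI P₁ i) (ψ (repOf P₁ i)) = ψ i
          rw [isRep_iff_repOf_eq.mp hrep, tI_rep' P₁ hrep, pow_zero]
          exact Equiv.Perm.one_apply _
        rw [hφψ]
        exact ((hψprops i hrep).2.2.2).mpr hi
      · apply mem_of_not_trivial hk q.2 (i := φ i)
        rintro ⟨hfix2, hu2⟩
        apply htr
        have hfix1 : P₁ i = i := by
          apply hφinj
          rw [hkey i, hfix2]
        refine ⟨hfix1, ?_⟩
        have h2 := hkey2 i
        rw [hfix1] at h2
        rw [hu2, one_mul] at h2
        have h3 : τ i * uRes hk w₁ hw₁ i = τ i * 1 := by rw [mul_one]; exact h2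
        exact mul_left_cancel h3
    · rw [Finset.card_image_of_injective _ hφinj, hcard]
  refine ⟨σ, hσblock, ?_⟩
  show (d₁.image (fun i => pPerm k n hk σ i), σ * w₁ * σ⁻¹) = (d₂, w₂)
  rw [himg, hconj_eq]

end

-- ==== AUX2 ====

/-- Two `k`-partial permutations are in the same orbit of the action of `B_{kn}^k` iff
their supports have the same size and their permutations have the same type. -/
theorem KPP_orbit_iff (k n : ℕ) (hk : 0 < k) (p q : KPP k n) :
    (∃ σ : Perm (Fin (k * n)), IsBlockPerm k n σ ∧ actKPP k n hk σ p.val = q.val) ↔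
      (p.val.1.card = q.val.1.card ∧
        ∀ ρ : Nat.Partition k, tyFam k n hk p.val.2 ρ = tyFam k n hk q.val.2 ρ) := by
  constructor
  · rintro ⟨σ, hσ, hact⟩
    exact forward_direction hk p q σ hσ hact
  · rintro ⟨hcard, hty⟩
    exact backward_direction hk p q hcard hty

end KWr
end

section
/- If two k-partial permutations (d₁,ω₁), (d₂,ω₂) have product (d₁∪d₂, ω₁ω₂), and for a k-partial permutation (d,ω) one defines deg₁(d,ω) to be the number of blocks of d plus the number of blocks of d on which ω acts as the identity, then deg₁(d₁∪d₂, ω₁ω₂) ≤ deg₁(d₁,ω₁) + deg₁(d₂,ω₂). -/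
open Equiv Finset

namespace KWr

/-- `deg₁` (number of blocks of the support plus number of blocks on which the
permutation acts as the identity) is subadditive for the product of `k`-partial
permutations, hence a filtration. -/
theorem deg1_subadditive (k n : ℕ) (hk : 0 < k) (p q : KPP k n) :
    deg1 k n (p.val.1 ∪ q.val.1, p.val.2 * q.val.2) ≤ deg1 k n p.val + deg1 k n q.val := by
  classical
  obtain ⟨⟨d₁, w₁⟩, h₁b, h₁f⟩ := p
  obtain ⟨⟨d₂, w₂⟩, h₂b, h₂f⟩ := q
  simp only [deg1]
  set F := (d₁ ∪ d₂).filter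
      (fun i : Fin n => ∀ x : Fin (k * n), (x : ℕ) / k = (i : ℕ) → (w₁ * w₂) x = x) with hF
  set F₁ := d₁.filter
      (fun i : Fin n => ∀ x : Fin (k * n), (x : ℕ) / k = (i : ℕ) → w₁ x = x) with hF₁
  set F₂ := d₂.filter
      (fun i : Fin n => ∀ x : Fin (k * n), (x : ℕ) / k = (i : ℕ) → w₂ x = x) with hF₂
  have hsub : F ⊆ F₁ ∪ F₂ ∪ (d₁ ∩ d₂) := by
    intro i hi
    rw [hF, Finset.mem_filter, Finset.mem_union] at hi
    obtain ⟨hid, hfix⟩ := hi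
    by_cases h1 : i ∈ d₁
    · by_cases h2 : i ∈ d₂
      · exact Finset.mem_union_right _ (Finset.mem_inter.mpr ⟨h1, h2⟩)
      · -- i ∉ d₂ : w₂ fixes block i, hence w₁ does too
        refine Finset.mem_union_left _ (Finset.mem_union_left _ ?_)
        rw [hF₁, Finset.mem_filter]
        refine ⟨h1, fun x hx => ?_⟩
        have hw2 : w₂ x = x := by
          apply h₂f x
          rintro ⟨j, hj, hjx⟩
          exact h2 (by rwa [show j = i from Fin.ext (hx ▸ hjx ▸ rfl)] at hj)
        have := hfix x hx
        rwa [Perm.mul_apply, hw2] at this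
    · -- i ∉ d₁ : w₁ fixes block i, so w₂ fixes it by injectivity
      have h2 : i ∈ d₂ := hid.resolve_left h1
      refine Finset.mem_union_left _ (Finset.mem_union_right _ ?_)
      rw [hF₂, Finset.mem_filter]
      refine ⟨h2, fun x hx => ?_⟩
      have hw1 : w₁ x = x := by
        apply h₁f x
        rintro ⟨j, hj, hjx⟩
        exact h1 (by rwa [show j = i from Fin.ext (hx ▸ hjx ▸ rfl)] at hj)
      have h := hfix x hx
      rw [Perm.mul_apply] at h
      have : w₁ (w₂ x) = w₁ x := by rw [h, hw1]
      exact w₁.injective this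
  have hcard : F.card ≤ F₁.card + F₂.card + (d₁ ∩ d₂).card := by
    calc F.card ≤ (F₁ ∪ F₂ ∪ (d₁ ∩ d₂)).card := Finset.card_le_card hsub
      _ ≤ (F₁ ∪ F₂).card + (d₁ ∩ d₂).card := Finset.card_union_le _ _
      _ ≤ F₁.card + F₂.card + (d₁ ∩ d₂).card :=
          Nat.add_le_add_right (Finset.card_union_le _ _) _
  have hdu : (d₁ ∪ d₂).card + (d₁ ∩ d₂).card = d₁.card + d₂.card :=
    Finset.card_union_add_card_inter d₁ d₂
  omega

end KWr
end

section
/- In the center of the group algebra of S_n (n ≥ 5): C_{(1^{n−2},2)} · C_{(1^{n−3},3)} = 2(n−2) C_{(1^{n−2},2)} + 4 C_{(1^{n−4},4)} + C_{(1^{n−5},2,3)}. -/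
open Equiv Finset


section Helpers
open Equiv Equiv.Perm Finset
variable {α : Type*} [Fintype α] [DecidableEq α]

theorem cycleType_eq_two_iff (σ : Perm α) : σ.cycleType = {2} ↔ σ.IsSwap := by
  constructor
  · intro h
    rw [← Equiv.Perm.card_support_eq_two, ← Equiv.Perm.sum_cycleType, h,
      Multiset.sum_singleton]
  · rintro ⟨x, y, hxy, rfl⟩
    rw [(Equiv.Perm.isCycle_swap hxy).cycleType, Equiv.Perm.card_support_swap hxy]

theorem cycleType_swap {x y : α} (h : x ≠ y) : (swap x y).cycleType = {2} :=
  (cycleType_eq_two_iff _).mpr ⟨x, y, h, rfl⟩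

theorem parts_eq_iff {n : ℕ} (σ : Perm (Fin n)) (m : Multiset ℕ) (k : ℕ)
    (hm : ∀ x ∈ m, 2 ≤ x) (hk : m.sum = k) :
    σ.partition.parts = Multiset.replicate (n - k) 1 + m ↔ σ.cycleType = m := by
  subst hk
  constructor
  · intro h
    have := Equiv.Perm.filter_parts_partition_eq_cycleType (σ := σ)
    rw [h, Multiset.filter_add] at this
    rw [← this, Multiset.filter_eq_self.2 hm, Multiset.filter_eq_nil.2 ?_, zero_add]
    intro a ha
    rw [Multiset.eq_of_mem_replicate ha]; omega
  · intro h
    rw [Equiv.Perm.parts_partition, h, ← Equiv.Perm.sum_cycleType, h, add_comm,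
      Fintype.card_fin]

theorem mem_types {σ τ : Perm α} (hσ : σ.cycleType = {2}) (hτ : τ.cycleType = {3}) :
    (σ * τ).cycleType = {2} ∨ (σ * τ).cycleType = {4} ∨
      (σ * τ).cycleType = ({2, 3} : Multiset ℕ) := by
  obtain ⟨x, y, hxy, rfl⟩ := (cycleType_eq_two_iff σ).mp hσ
  obtain ⟨m, hm⟩ : ∃ m, (swap x y * τ).cycleType = m := ⟨_, rfl⟩
  rw [hm]
  have h2 : ∀ a ∈ m, 2 ≤ a := fun a ha => Equiv.Perm.two_le_of_mem_cycleType (hm ▸ ha)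
  have hsum : m.sum ≤ 5 := by
    rw [← hm, Equiv.Perm.sum_cycleType]
    calc (swap x y * τ).support.card ≤ ((swap x y).support ∪ τ.support).card :=
        Finset.card_le_card (Equiv.Perm.support_mul_le _ _)
      _ ≤ (swap x y).support.card + τ.support.card := Finset.card_union_le _ _
      _ = 5 := by
          rw [Equiv.Perm.card_support_swap hxy, ← Equiv.Perm.sum_cycleType, hτ]; rfl
  have hsign : Equiv.Perm.sign (swap x y * τ) = -1 := by
    rw [map_mul, Equiv.Perm.sign_swap hxy, (show τ.IsThreeCycle from hτ).sign, mul_one]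
  have hodd : Odd (m.sum + Multiset.card m) := by
    by_contra h
    rw [Nat.not_odd_iff_even] at h
    rw [Equiv.Perm.sign_of_cycleType, hm, h.neg_one_pow] at hsign
    exact (by decide : (1 : ℤˣ) ≠ -1) hsign
  have hc : Multiset.card m * 2 ≤ m.sum := by
    simpa using Multiset.card_nsmul_le_sum h2
  rcases (show Multiset.card m = 0 ∨ Multiset.card m = 1 ∨ Multiset.card m = 2 by omega)
    with hcard | hcard | hcard
  · rw [Multiset.card_eq_zero] at hcard
    rw [hcard] at hodd; simp at hodd
  · rw [Multiset.card_eq_one] at hcard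
    obtain ⟨a, rfl⟩ := hcard
    have ha2 := h2 a (Multiset.mem_singleton_self a)
    rw [Multiset.sum_singleton] at hsum hodd
    interval_cases a
    · exact Or.inl rfl
    · exfalso; revert hodd; decide
    · exact Or.inr (Or.inl rfl)
    · exfalso; revert hodd; decide
  · rw [Multiset.card_eq_two] at hcard
    obtain ⟨a, b, rfl⟩ := hcard
    have ha2 := h2 a (by simp)
    have hb2 := h2 b (by simp)
    have hs : a + b = 5 := by
      have h1 : (({a, b} : Multiset ℕ)).sum = a + b := by simp
      have h2' : Multiset.card (({a, b} : Multiset ℕ)) = 2 := by simp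
      rw [h1] at hsum
      rw [h1, h2'] at hodd
      obtain ⟨k, hk⟩ := hodd
      omega
    refine Or.inr (Or.inr ?_)
    have : a = 2 ∧ b = 3 ∨ a = 3 ∧ b = 2 := by omega
    rcases this with ⟨rfl, rfl⟩ | ⟨rfl, rfl⟩
    · rfl
    · exact Multiset.pair_comm 3 2

theorem disjoint_swap_swap {x y a b : α} (hxy : x ≠ y) (hab : a ≠ b)
    (hxa : x ≠ a) (hxb : x ≠ b) (hya : y ≠ a) (hyb : y ≠ b) :
    Equiv.Perm.Disjoint (swap x y) (swap a b) := by
  rw [Equiv.Perm.disjoint_iff_disjoint_support, Equiv.Perm.support_swap hxy,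
    Equiv.Perm.support_swap hab]
  simp [Finset.disjoint_left, hxa, hxb, hya, hyb]

set_option maxHeartbeats 1000000 in
theorem count_two {g : Perm α} {a b : α} (hab : a ≠ b) (hg : g = swap a b) :
    (univ.filter (fun σ : Perm α =>
      σ.cycleType = {2} ∧ (σ⁻¹ * g).cycleType = {3})).card =
      2 * (Fintype.card α - 2) := by
  classical
  have key : (univ.filter (fun σ : Perm α =>
      σ.cycleType = {2} ∧ (σ⁻¹ * g).cycleType = {3})) =
      ((univ \ {a, b}).image (fun x => swap x a)) ∪
      ((univ \ {a, b}).image (fun x => swap x b)) := by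
    ext σ
    simp only [Finset.mem_filter, Finset.mem_union, Finset.mem_image, Finset.mem_sdiff,
      Finset.mem_univ, true_and, Finset.mem_insert, Finset.mem_singleton, not_or]
    constructor
    · rintro ⟨h2, h3⟩
      obtain ⟨x, y, hxy, rfl⟩ := (cycleType_eq_two_iff σ).mp h2
      rw [Equiv.swap_inv, hg] at h3
      by_cases hxa : x = a
      · subst hxa
        by_cases hyb : y = b
        · subst hyb
          rw [Equiv.swap_mul_self] at h3
          rw [Equiv.Perm.cycleType_one] at h3
          exact absurd h3 (by decide)
        · exact Or.inl ⟨y, ⟨fun h => hxy h.symm, hyb⟩, (Equiv.swap_comm x y).symm⟩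
      · by_cases hxb : x = b
        · subst hxb
          by_cases hya : y = a
          · subst hya
            rw [Equiv.swap_comm x y, Equiv.swap_mul_self] at h3
            rw [Equiv.Perm.cycleType_one] at h3
            exact absurd h3 (by decide)
          · exact Or.inr ⟨y, ⟨hya, fun h => hxy h.symm⟩, (Equiv.swap_comm x y).symm⟩
        · by_cases hya : y = a
          · subst hya
            exact Or.inl ⟨x, ⟨hxa, hxb⟩, rfl⟩
          · by_cases hyb : y = b
            · subst hyb
              exact Or.inr ⟨x, ⟨hxa, hxb⟩, rfl⟩
            · exfalso
              have hd := disjoint_swap_swap hxy hab hxa hxb hya hyb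
              rw [hd.cycleType_mul] at h3
              have : (swap x y).cycleType = {2} := h2
              have hab2 : (swap a b).cycleType = {2} :=
                (cycleType_eq_two_iff _).mpr ⟨a, b, hab, rfl⟩
              rw [this, hab2] at h3
              exact absurd h3 (by decide)
    · rintro (⟨x, ⟨hxa, hxb⟩, rfl⟩ | ⟨x, ⟨hxa, hxb⟩, rfl⟩)
      · refine ⟨(cycleType_eq_two_iff _).mpr ⟨x, a, hxa, rfl⟩, ?_⟩
        rw [Equiv.swap_inv, hg, Equiv.swap_comm x a]
        exact Equiv.Perm.isThreeCycle_swap_mul_swap_same (Ne.symm hxa) hab (by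
          exact hxb)
      · refine ⟨(cycleType_eq_two_iff _).mpr ⟨x, b, hxb, rfl⟩, ?_⟩
        rw [Equiv.swap_inv, hg, Equiv.swap_comm x b, Equiv.swap_comm a b]
        exact Equiv.Perm.isThreeCycle_swap_mul_swap_same (Ne.symm hxb) (Ne.symm hab)
          (by exact hxa)
  rw [key]
  have hcard1 : ((univ \ {a, b}).image (fun x => swap x a)).card = Fintype.card α - 2 := by
    rw [Finset.card_image_of_injOn, Finset.card_sdiff_of_subset (by simp), Finset.card_univ]
    · congr 1
      rw [Finset.card_insert_of_notMem (by simp [hab]), Finset.card_singleton]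
    · intro x _ y _ hxy
      have := congrArg (fun f : Perm α => f a) hxy
      simpa [Equiv.swap_apply_right] using this
  have hcard2 : ((univ \ {a, b}).image (fun x => swap x b)).card = Fintype.card α - 2 := by
    rw [Finset.card_image_of_injOn, Finset.card_sdiff_of_subset (by simp), Finset.card_univ]
    · congr 1
      rw [Finset.card_insert_of_notMem (by simp [hab]), Finset.card_singleton]
    · intro x _ y _ hxy
      have := congrArg (fun f : Perm α => f b) hxy
      simpa [Equiv.swap_apply_right] using this
  have hdisj : Disjoint ((univ \ {a, b}).image (fun x => swap x a))
      ((univ \ {a, b}).image (fun x => swap x b)) := by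
    rw [Finset.disjoint_left]
    rintro σ h1 h2
    obtain ⟨x, hx, rfl⟩ := Finset.mem_image.mp h1
    obtain ⟨y, hy, heq⟩ := Finset.mem_image.mp h2
    simp only [Finset.mem_sdiff, Finset.mem_insert, Finset.mem_singleton, Finset.mem_univ,
      true_and, not_or] at hx hy
    have := congrArg (fun f : Perm α => f b) heq
    simp only [Equiv.swap_apply_right] at this
    rw [Equiv.swap_apply_of_ne_of_ne (Ne.symm hx.2) (Ne.symm hab)] at this
    exact hy.2 this
  rw [Finset.card_union_of_disjoint hdisj, hcard1, hcard2]
  ring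

theorem pow_apply_ne {g : Perm α} (hc : g.IsCycle) {a : α} (ha : a ∈ g.support)
    {m : ℕ} (hm1 : 0 < m) (hm2 : m < orderOf g) : (g ^ m) a ≠ a := by
  intro h
  have h1 : g ^ m = 1 := (hc.pow_eq_one_iff' (Equiv.Perm.mem_support.mp ha)).mpr h
  exact absurd (orderOf_le_of_pow_eq_one hm1 h1) (not_le.mpr hm2)

theorem four_facts {g : Perm α} (hg : g.cycleType = {4}) :
    g.IsCycle ∧ orderOf g = 4 ∧ g.support.card = 4 := by
  have hcyc : g.IsCycle := Equiv.Perm.card_cycleType_eq_one.mp (by rw [hg]; rfl)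
  have hord : orderOf g = 4 := by
    rw [← Equiv.Perm.lcm_cycleType, hg, Multiset.lcm_singleton, normalize_eq]
  have hsupp : g.support.card = 4 := by
    rw [← Equiv.Perm.sum_cycleType, hg]; rfl
  exact ⟨hcyc, hord, hsupp⟩

theorem adj_three {g : Perm α} (hg : g.cycleType = {4}) {a : α} (ha : a ∈ g.support) :
    (swap a (g a) * g).cycleType = {3} := by
  obtain ⟨hcyc, hord, hsupp⟩ := four_facts hg
  set b := g a with hb
  set c := g b with hc
  set d := g c with hd
  have hpow1 : (g ^ 1) a = b := by simp [hb]
  have hpow2 : (g ^ 2) a = c := by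
    rw [pow_succ', pow_one, Equiv.Perm.mul_apply, ← hb, ← hc]
  have hpow3 : (g ^ 3) a = d := by
    rw [pow_succ', Equiv.Perm.mul_apply, hpow2, ← hd]
  have hgd : g d = a := by
    have h4 : (g ^ 4) a = a := by rw [← hord, pow_orderOf_eq_one]; rfl
    have h5 : (g ^ 4) a = g d := by
      rw [show (4 : ℕ) = 3 + 1 from rfl, pow_succ' g 3, Equiv.Perm.mul_apply, hpow3]
    rw [h5] at h4; exact h4
  have hba : b ≠ a := by simpa [hpow1] using pow_apply_ne hcyc ha one_pos (by omega)
  have hca : c ≠ a := by simpa [hpow2] using pow_apply_ne hcyc ha two_pos (by omega)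
  have hda : d ≠ a := by simpa [hpow3] using pow_apply_ne (m := 3) hcyc ha (by omega) (by omega)
  have hcb : c ≠ b := fun h => hba (g.injective (hc ▸ hb ▸ h))
  have hdb : d ≠ b := by
    have hbs : b ∈ g.support := by rw [hb]; exact Equiv.Perm.apply_mem_support.mpr ha
    have : (g ^ 2) b ≠ b := pow_apply_ne hcyc hbs two_pos (by omega)
    intro h; apply this
    rw [pow_succ, pow_one]; rw [hd, hc] at h; exact h
  have hdc : d ≠ c := fun h => hcb (g.injective (hd ▸ hc ▸ h))
  have hsuppset : g.support = {a, b, c, d} := by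
    have hsub : ({a, b, c, d} : Finset α) ⊆ g.support := by
      intro x hx
      simp only [Finset.mem_insert, Finset.mem_singleton] at hx
      rcases hx with rfl | rfl | rfl | rfl
      · exact ha
      · exact Equiv.Perm.apply_mem_support.mpr ha
      · exact Equiv.Perm.apply_mem_support.mpr (Equiv.Perm.apply_mem_support.mpr ha)
      · exact Equiv.Perm.apply_mem_support.mpr
          (Equiv.Perm.apply_mem_support.mpr (Equiv.Perm.apply_mem_support.mpr ha))
    have hc4 : ({a, b, c, d} : Finset α).card = 4 := by
      rw [Finset.card_insert_of_notMem (by simp [hba.symm, hca.symm, hda.symm]),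
        Finset.card_insert_of_notMem (by simp [hcb.symm, hdb.symm]),
        Finset.card_insert_of_notMem (by simp [hdc.symm]), Finset.card_singleton]
    exact (Finset.eq_of_subset_of_card_le hsub (by omega)).symm
  have hkey : swap a b * g = swap c b * swap c d := by
    ext x
    simp only [Equiv.Perm.coe_mul, Function.comp_apply]
    by_cases hxa : x = a
    · subst hxa
      rw [← hb, Equiv.swap_apply_right,
        Equiv.swap_apply_of_ne_of_ne hca.symm hda.symm,
        Equiv.swap_apply_of_ne_of_ne hca.symm hba.symm]
    · by_cases hxb : x = b
      · subst hxb
        rw [← hc, Equiv.swap_apply_of_ne_of_ne hca hcb,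
          Equiv.swap_apply_of_ne_of_ne hcb.symm hdb.symm, Equiv.swap_apply_right]
      · by_cases hxc : x = c
        · subst hxc
          rw [← hd, Equiv.swap_apply_of_ne_of_ne hda hdb, Equiv.swap_apply_left,
            Equiv.swap_apply_of_ne_of_ne hdc hdb]
        · by_cases hxd : x = d
          · subst hxd
            rw [hgd, Equiv.swap_apply_left, Equiv.swap_apply_right,
              Equiv.swap_apply_left]
          · have hxs : x ∉ g.support := by
              rw [hsuppset]; simp [hxa, hxb, hxc, hxd]
            rw [Equiv.Perm.notMem_support.mp hxs,
              Equiv.swap_apply_of_ne_of_ne hxa hxb,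
              Equiv.swap_apply_of_ne_of_ne hxc hxd,
              Equiv.swap_apply_of_ne_of_ne hxc hxb]
  rw [hkey]
  exact Equiv.Perm.isThreeCycle_swap_mul_swap_same hcb hdc.symm (Ne.symm hdb)

set_option maxHeartbeats 1000000 in
theorem count_four {g : Perm α} (hg : g.cycleType = {4}) :
    (univ.filter (fun σ : Perm α =>
      σ.cycleType = {2} ∧ (σ⁻¹ * g).cycleType = {3})).card = 4 := by
  obtain ⟨hcyc, hord, hsupp⟩ := four_facts hg
  have key : (univ.filter (fun σ : Perm α =>
      σ.cycleType = {2} ∧ (σ⁻¹ * g).cycleType = {3})) =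
      g.support.image (fun v => swap v (g v)) := by
    ext σ
    simp only [Finset.mem_filter, Finset.mem_image, Finset.mem_univ, true_and]
    constructor
    · rintro ⟨h2, h3⟩
      obtain ⟨x, y, hxy, rfl⟩ := (cycleType_eq_two_iff σ).mp h2
      rw [Equiv.swap_inv] at h3
      have hgτ : g = swap x y * (swap x y * g) := by
        rw [← mul_assoc, Equiv.swap_mul_self, one_mul]
      have hτ3 : (swap x y * g).cycleType = {3} := h3
      have hτsupp : (swap x y * g).support.card = 3 := by
        rw [← Equiv.Perm.sum_cycleType, hτ3]; rfl
      by_cases hx : x ∈ (swap x y * g).support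
      · by_cases hy : y ∈ (swap x y * g).support
        · exfalso
          have hsub : g.support ⊆ (swap x y * g).support := by
            intro z hz
            rw [hgτ] at hz
            have hz2 := Equiv.Perm.support_mul_le (swap x y) (swap x y * g) hz
            rw [Finset.sup_eq_union, Finset.mem_union] at hz2
            rcases hz2 with h | h
            · rw [Equiv.Perm.support_swap hxy] at h
              simp only [Finset.mem_insert, Finset.mem_singleton] at h
              rcases h with rfl | rfl
              · exact hx
              · exact hy
            · exact h
          have h43 : (4 : ℕ) ≤ 3 := by
            rw [← hsupp, ← hτsupp]; exact Finset.card_le_card hsub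
          omega
        · have hτy : (swap x y * g) y = y := Equiv.Perm.notMem_support.mp hy
          have hgy : g y = x := by
            have : swap x y ((swap x y * g) y) = swap x y y := by rw [hτy]
            rw [← Equiv.Perm.mul_apply, ← hgτ, Equiv.swap_apply_right] at this
            exact this
          refine ⟨y, ?_, ?_⟩
          · rw [Equiv.Perm.mem_support, hgy]; exact hxy
          · rw [hgy]; exact Equiv.swap_comm y x
      · by_cases hy : y ∈ (swap x y * g).support
        · have hτx : (swap x y * g) x = x := Equiv.Perm.notMem_support.mp hx
          have hgx : g x = y := by
            have : swap x y ((swap x y * g) x) = swap x y x := by rw [hτx]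
            rw [← Equiv.Perm.mul_apply, ← hgτ, Equiv.swap_apply_left] at this
            exact this
          refine ⟨x, ?_, ?_⟩
          · rw [Equiv.Perm.mem_support, hgx]; exact fun h => hxy h.symm
          · rw [hgx]
        · exfalso
          have hd : Equiv.Perm.Disjoint (swap x y) (swap x y * g) := by
            rw [Equiv.Perm.disjoint_iff_disjoint_support, Equiv.Perm.support_swap hxy,
              Finset.disjoint_left]
            intro z hz
            simp only [Finset.mem_insert, Finset.mem_singleton] at hz
            rcases hz with rfl | rfl
            · exact hx
            · exact hy
          have hct := hd.cycleType_mul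
          rw [← hgτ, hg, h2, hτ3] at hct
          exact absurd hct (by decide)
    · rintro ⟨v, hv, rfl⟩
      have hgv : g v ≠ v := Equiv.Perm.mem_support.mp hv
      refine ⟨(cycleType_eq_two_iff _).mpr ⟨v, g v, fun h => hgv h.symm, rfl⟩, ?_⟩
      rw [Equiv.swap_inv]
      exact adj_three hg hv
  rw [key, Finset.card_image_of_injOn, hsupp]
  intro v hv w hw hvw
  by_contra hne
  simp only at hvw
  have h1 : g v = swap w (g w) v := by rw [← hvw, Equiv.swap_apply_left]
  rw [Finset.mem_coe] at hv hw
  by_cases hvg : v = g w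
  · have hgv : g v = w := by rw [h1, hvg, Equiv.swap_apply_right]
    have : (g ^ 2) w = w := by
      rw [pow_succ', pow_one, Equiv.Perm.mul_apply, ← hvg, hgv]
    exact pow_apply_ne hcyc hw two_pos (by omega) this
  · rw [Equiv.swap_apply_of_ne_of_ne hne hvg] at h1
    exact Equiv.Perm.mem_support.mp hv h1

theorem decomp_23 {g : Perm α} (hg : g.cycleType = ({2, 3} : Multiset ℕ)) :
    ∃ c2 c3 : Perm α, g = c2 * c3 ∧ Equiv.Perm.Disjoint c2 c3 ∧
      c2.cycleType = {2} ∧ c3.cycleType = {3} ∧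
      g.cycleFactorsFinset = {c2, c3} := by
  have hd := Equiv.Perm.cycleType_def g
  rw [hg] at hd
  have hcard : g.cycleFactorsFinset.card = 2 := by
    have := congrArg Multiset.card hd
    simpa [Multiset.card_map] using this.symm
  obtain ⟨a, b, hne, hset⟩ := Finset.card_eq_two.mp hcard
  have hval : g.cycleFactorsFinset.val = ({a, b} : Multiset (Perm α)) := by
    rw [hset, Finset.insert_val, Multiset.ndinsert_of_notMem (by simp [hne])]; rfl
  rw [hval] at hd
  have hmema : a ∈ g.cycleFactorsFinset := by rw [hset]; simp
  have hmemb : b ∈ g.cycleFactorsFinset := by rw [hset]; simp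
  have hca : a.IsCycle := (Equiv.Perm.mem_cycleFactorsFinset_iff.mp hmema).1
  have hcb : b.IsCycle := (Equiv.Perm.mem_cycleFactorsFinset_iff.mp hmemb).1
  have hdisj : Equiv.Perm.Disjoint a b :=
    (Equiv.Perm.cycleFactorsFinset_pairwise_disjoint g)
      (Finset.mem_coe.mpr hmema) (Finset.mem_coe.mpr hmemb) hne
  have hprod : g = a * b := by
    apply cycleFactorsFinset_injective
    rw [hdisj.cycleFactorsFinset_mul_eq_union, hca.cycleFactorsFinset_eq_singleton,
      hcb.cycleFactorsFinset_eq_singleton, hset]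
    ext z; simp
  have hmap : ({a, b} : Multiset (Perm α)).map (Finset.card ∘ Equiv.Perm.support) =
      {a.support.card, b.support.card} := by
    simp [Multiset.insert_eq_cons]
  rw [hmap] at hd
  have hpair : (2 : ℕ) ::ₘ ({3} : Multiset ℕ) =
      a.support.card ::ₘ ({b.support.card} : Multiset ℕ) := by
    simpa [Multiset.insert_eq_cons] using hd
  rcases Multiset.cons_eq_cons.mp hpair with ⟨h1, h2⟩ | ⟨hne', cs, h1, h2⟩
  · have hb3 : b.support.card = 3 := (Multiset.singleton_inj.mp h2).symm
    refine ⟨a, b, hprod, hdisj, ?_, ?_, hset⟩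
    · rw [hca.cycleType, ← h1]
    · rw [hcb.cycleType, hb3]
  · obtain ⟨hb2, hcs⟩ := (Multiset.singleton_eq_cons_iff _).mp h2
    rw [hcs] at h1
    have ha3 : a.support.card = 3 := ((Multiset.singleton_inj.mp h1)).symm
    refine ⟨b, a, ?_, hdisj.symm, ?_, ?_, ?_⟩
    · rw [hprod, hdisj.commute.eq]
    · rw [hcb.cycleType, ← hb2]
    · rw [hca.cycleType, ha3]
    · rw [hset, Finset.pair_comm]

set_option maxHeartbeats 1000000 in
theorem count_23 {g : Perm α} (hg : g.cycleType = ({2, 3} : Multiset ℕ)) :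
    (univ.filter (fun σ : Perm α =>
      σ.cycleType = {2} ∧ (σ⁻¹ * g).cycleType = {3})).card = 1 := by
  obtain ⟨c2, c3, hprod, hdisj, h2, h3, hset⟩ := decomp_23 hg
  rw [Finset.card_eq_one]
  refine ⟨c2, ?_⟩
  ext σ
  simp only [Finset.mem_filter, Finset.mem_univ, true_and, Finset.mem_singleton]
  constructor
  · rintro ⟨hσ2, hσ3⟩
    obtain ⟨x, y, hxy, rfl⟩ := (cycleType_eq_two_iff σ).mp hσ2
    rw [Equiv.swap_inv] at hσ3
    have hgτ : g = swap x y * (swap x y * g) := by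
      rw [← mul_assoc, Equiv.swap_mul_self, one_mul]
    have hτc : (swap x y * g).IsCycle := by
      rw [← Equiv.Perm.card_cycleType_eq_one, hσ3]; rfl
    have hsg : g.support.card = 5 := by rw [← Equiv.Perm.sum_cycleType, hg]; rfl
    have hsτ : (swap x y * g).support.card = 3 := by
      rw [← Equiv.Perm.sum_cycleType, hσ3]; rfl
    have hsub : g.support ⊆ {x, y} ∪ (swap x y * g).support := by
      intro z hz
      rw [hgτ] at hz
      have hz2 := Equiv.Perm.support_mul_le (swap x y) (swap x y * g) hz
      rw [Finset.sup_eq_union, Finset.mem_union] at hz2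
      rcases hz2 with h | h
      · rw [Equiv.Perm.support_swap hxy] at h
        exact Finset.mem_union_left _ h
      · exact Finset.mem_union_right _ h
    have hdisj2 : _root_.Disjoint ({x, y} : Finset α) (swap x y * g).support := by
      have h5 : (5 : ℕ) ≤ (({x, y} : Finset α) ∪ (swap x y * g).support).card := by
        rw [← hsg]; exact Finset.card_le_card hsub
      have hxy2 : ({x, y} : Finset α).card = 2 := by
        rw [Finset.card_insert_of_notMem (by simp [hxy]), Finset.card_singleton]
      have := Finset.card_union_add_card_inter ({x, y} : Finset α) (swap x y * g).support
      rw [hxy2, hsτ] at this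
      have hint : (({x, y} : Finset α) ∩ (swap x y * g).support).card = 0 := by omega
      rw [Finset.card_eq_zero] at hint
      rwa [Finset.disjoint_iff_inter_eq_empty]
    have hpd : Equiv.Perm.Disjoint (swap x y) (swap x y * g) := by
      rw [Equiv.Perm.disjoint_iff_disjoint_support, Equiv.Perm.support_swap hxy]
      exact hdisj2
    have hfact : g.cycleFactorsFinset = {swap x y, swap x y * g} := by
      rw [hgτ, hpd.cycleFactorsFinset_mul_eq_union,
        (Equiv.Perm.isCycle_swap hxy).cycleFactorsFinset_eq_singleton,
        hτc.cycleFactorsFinset_eq_singleton]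
      ext z; simp
    rw [hset] at hfact
    have hmem : swap x y ∈ ({c2, c3} : Finset (Perm α)) := by
      rw [hfact]; simp
    rcases Finset.mem_insert.mp hmem with h | h
    · exact h
    · exfalso
      rw [Finset.mem_singleton] at h
      have hc3 : c3.support.card = 3 := by rw [← Equiv.Perm.sum_cycleType, h3]; rfl
      rw [← h, Equiv.Perm.card_support_swap hxy] at hc3
      omega
  · rintro rfl
    refine ⟨h2, ?_⟩
    rw [hprod, inv_mul_cancel_left]
    exact h3

end Helpers


namespace KWr

section Glue
open Equiv Equiv.Perm Finset
open scoped Classical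

theorem CS_apply (n : ℕ) (m : Multiset ℕ) (g : Perm (Fin n)) :
    (CS n m).coeff g = if g.partition.parts = m then 1 else 0 := by
  rw [CS, MonoidAlgebra.coeff_sum, Finset.sum_apply']
  simp only [MonoidAlgebra.of_apply, MonoidAlgebra.coeff_single, Finsupp.single_apply]
  rw [Finset.sum_ite_eq' _ g (fun _ => (1 : ℂ))]
  simp [Finset.mem_filter]

theorem CS_mul_apply (n : ℕ) (m1 m2 : Multiset ℕ) (g : Perm (Fin n)) :
    (CS n m1 * CS n m2).coeff g =
      ((Finset.univ.filter (fun σ : Perm (Fin n) =>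
        σ.partition.parts = m1 ∧ (σ⁻¹ * g).partition.parts = m2)).card : ℂ) := by
  rw [CS, CS, Finset.sum_mul_sum]
  simp only [← map_mul]
  rw [MonoidAlgebra.coeff_sum, Finset.sum_apply']
  have hinner : ∀ σ : Perm (Fin n),
      (∑ τ ∈ Finset.univ.filter (fun τ : Perm (Fin n) => τ.partition.parts = m2),
        MonoidAlgebra.of ℂ (Perm (Fin n)) (σ * τ)).coeff g =
      if (σ⁻¹ * g).partition.parts = m2 then 1 else 0 := by
    intro σ
    rw [MonoidAlgebra.coeff_sum, Finset.sum_apply']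
    simp only [MonoidAlgebra.of_apply, MonoidAlgebra.coeff_single, Finsupp.single_apply]
    have hcong : ∀ τ ∈ Finset.univ.filter
        (fun τ : Perm (Fin n) => τ.partition.parts = m2),
        (if σ * τ = g then (1 : ℂ) else 0) = (if τ = σ⁻¹ * g then (1 : ℂ) else 0) := by
      intro τ _
      congr 1
      simp only [eq_iff_iff]
      constructor
      · intro h; rw [← h, inv_mul_cancel_left]
      · intro h; rw [h, mul_inv_cancel_left]
    rw [Finset.sum_congr rfl hcong, Finset.sum_ite_eq' _ (σ⁻¹ * g) (fun _ => (1 : ℂ))]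
    simp [Finset.mem_filter]
  rw [Finset.sum_congr rfl (fun σ _ => hinner σ), Finset.sum_boole, Finset.filter_filter]

end Glue

/-- In `Z(ℂ[S_n])` for `n ≥ 5`:
`C_{(1^{n-2},2)} C_{(1^{n-3},3)} = 2(n-2) C_{(1^{n-2},2)} + 4 C_{(1^{n-4},4)} + C_{(1^{n-5},2,3)}`. -/
theorem classSum_two_three (n : ℕ) (hn : 5 ≤ n) :
    CS n (Multiset.replicate (n - 2) 1 + {2}) * CS n (Multiset.replicate (n - 3) 1 + {3}) =
      (2 * ((n : ℂ) - 2)) • CS n (Multiset.replicate (n - 2) 1 + {2}) +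
      (4 : ℂ) • CS n (Multiset.replicate (n - 4) 1 + {4}) +
      CS n (Multiset.replicate (n - 5) 1 + {2, 3}) := by
  classical
  refine MonoidAlgebra.ext (Finsupp.ext fun g => ?_)
  rw [MonoidAlgebra.coeff_add, MonoidAlgebra.coeff_add, MonoidAlgebra.coeff_smul,
    MonoidAlgebra.coeff_smul, Finsupp.add_apply, Finsupp.add_apply, Finsupp.smul_apply, Finsupp.smul_apply,
    CS_mul_apply, CS_apply, CS_apply, CS_apply]
  simp only [smul_eq_mul]
  have hm2 : ∀ σ : Perm (Fin n),
      σ.partition.parts = Multiset.replicate (n - 2) 1 + {2} ↔ σ.cycleType = {2} :=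
    fun σ => parts_eq_iff σ {2} 2 (by intro x hx; simp at hx; omega) (by simp)
  have hm3 : ∀ σ : Perm (Fin n),
      σ.partition.parts = Multiset.replicate (n - 3) 1 + {3} ↔ σ.cycleType = {3} :=
    fun σ => parts_eq_iff σ {3} 3 (by intro x hx; simp at hx; omega) (by simp)
  have hm4 : ∀ σ : Perm (Fin n),
      σ.partition.parts = Multiset.replicate (n - 4) 1 + {4} ↔ σ.cycleType = {4} :=
    fun σ => parts_eq_iff σ {4} 4 (by intro x hx; simp at hx; omega) (by simp)
  have hm23 : ∀ σ : Perm (Fin n),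
      σ.partition.parts = Multiset.replicate (n - 5) 1 + {2, 3} ↔
        σ.cycleType = ({2, 3} : Multiset ℕ) :=
    fun σ => parts_eq_iff σ {2, 3} 5 (by intro x hx; simp at hx; omega) (by simp)
  have hfilter : Finset.univ.filter (fun σ : Perm (Fin n) =>
      σ.partition.parts = Multiset.replicate (n - 2) 1 + {2} ∧
      (σ⁻¹ * g).partition.parts = Multiset.replicate (n - 3) 1 + {3}) =
      Finset.univ.filter (fun σ : Perm (Fin n) =>
      σ.cycleType = {2} ∧ (σ⁻¹ * g).cycleType = {3}) :=
    Finset.filter_congr fun σ _ => by rw [hm2 σ, hm3 (σ⁻¹ * g)]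
  rw [hfilter]
  by_cases h2 : g.cycleType = {2}
  · obtain ⟨a, b, hab, hg⟩ := (cycleType_eq_two_iff g).mp h2
    rw [count_two hab hg]
    simp only [Fintype.card_fin]
    rw [if_pos ((hm2 g).mpr h2),
      if_neg (fun hc => absurd ((hm4 g).mp hc) (by rw [h2]; decide)),
      if_neg (fun hc => absurd ((hm23 g).mp hc) (by rw [h2]; decide))]
    have h2n : (2 : ℕ) ≤ n := by omega
    push_cast [Nat.cast_sub h2n]
    ring
  · by_cases h4 : g.cycleType = {4}
    · rw [count_four h4,
        if_neg (fun hc => h2 ((hm2 g).mp hc)),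
        if_pos ((hm4 g).mpr h4),
        if_neg (fun hc => absurd ((hm23 g).mp hc) (by rw [h4]; decide))]
      norm_num
    · by_cases h23 : g.cycleType = ({2, 3} : Multiset ℕ)
      · rw [count_23 h23,
          if_neg (fun hc => h2 ((hm2 g).mp hc)),
          if_neg (fun hc => h4 ((hm4 g).mp hc)),
          if_pos ((hm23 g).mpr h23)]
        norm_num
      · have hempty : Finset.univ.filter (fun σ : Perm (Fin n) =>
            σ.cycleType = {2} ∧ (σ⁻¹ * g).cycleType = {3}) = ∅ := by
          rw [Finset.filter_eq_empty_iff]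
          rintro σ - ⟨hσ2, hσ3⟩
          have hmt := mem_types hσ2 hσ3
          rw [mul_inv_cancel_left] at hmt
          rcases hmt with h | h | h
          exacts [h2 h, h4 h, h23 h]
        rw [hempty, Finset.card_empty,
          if_neg (fun hc => h2 ((hm2 g).mp hc)),
          if_neg (fun hc => h4 ((hm4 g).mp hc)),
          if_neg (fun hc => h23 ((hm23 g).mp hc))]
        norm_num

end KWr
end

section
/- Let Λ, Δ, Γ be families of partitions indexed by partitions of k and let c_{ΛΔ}^Γ be the number of pairs ((d₁,ω₁),(d₂,ω₂)) of k-partial permutations of type Λ and Δ respectively whose product equals a fixed k-partial permutation of type Γ with support k|Γ|. If c_{ΛΔ}^Γ ≠ 0 then max(|Λ|,|Δ|) ≤ |Γ| ≤ |Λ|+|Δ|. -/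
open Equiv Finset

namespace KWr

/-- If the structure coefficient `c_{ΛΔ}^Γ` is nonzero, i.e. there is a pair of
`k`-partial permutations of types `Λ` and `Δ` whose product is a fixed `k`-partial
permutation of type `Γ` with support of `|Γ|` blocks, then
`max(|Λ|, |Δ|) ≤ |Γ| ≤ |Λ| + |Δ|`. -/
theorem structure_coeff_support (k n : ℕ) (hk : 0 < k)
    (Λ Δ Γ : Nat.Partition k → Multiset ℕ)
    (hΛ : ∀ ρ, ∀ x ∈ Λ ρ, 0 < x) (hΔ : ∀ ρ, ∀ x ∈ Δ ρ, 0 < x) (hΓ : ∀ ρ, ∀ x ∈ Γ ρ, 0 < x)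
    (r : KPP k n) (hr : HasTypeKPP k n hk r Γ)
    (hne : Nat.card {pq : KPP k n × KPP k n //
        HasTypeKPP k n hk pq.1 Λ ∧ HasTypeKPP k n hk pq.2 Δ ∧
        pq.1.val.1 ∪ pq.2.val.1 = r.val.1 ∧ pq.1.val.2 * pq.2.val.2 = r.val.2} ≠ 0) :
    max (famSize k Λ) (famSize k Δ) ≤ famSize k Γ ∧
      famSize k Γ ≤ famSize k Λ + famSize k Δ := by
  obtain ⟨⟨⟨p, q⟩, hpΛ, hqΔ, hunion, -⟩⟩ := Nat.card_ne_zero.mp hne |>.1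
  have hΓc : r.val.1.card = famSize k Γ := hr.1
  have hΛc : p.val.1.card = famSize k Λ := hpΛ.1
  have hΔc : q.val.1.card = famSize k Δ := hqΔ.1
  constructor
  · rw [max_le_iff, ← hΓc, ← hΛc, ← hΔc, ← hunion]
    exact ⟨Finset.card_le_card Finset.subset_union_left,
      Finset.card_le_card Finset.subset_union_right⟩
  · rw [← hΓc, ← hΛc, ← hΔc, ← hunion]
    exact Finset.card_union_le _ _

end KWr
end

section
/- For partitions ρ of n, λ of k and a permutation ω ∈ B_{kn}^k, one has ⋃_{ρ⊢k} ω(ρ) = ct(p_ω) (as a partition of n) and ∑_{ρ⊢k}|ω(ρ)| = n, where p_ω ∈ S_n is the induced block permutation and ct denotes cycle type. -/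
open Equiv Finset

namespace KWr

open scoped Classical in
/-- `cycLen` of an element of the support is the cardinality of the support of its cycle. -/
private lemma cycLen_eq_card_support_cycleOf {n : ℕ} (p : Perm (Fin n)) {x : Fin n}
    (hx : x ∈ p.support) : cycLen p x = (p.cycleOf x).support.card := by
  have hpx : p x ≠ x := Equiv.Perm.mem_support.mp hx
  have hc : (p.cycleOf x).IsCycle := Equiv.Perm.isCycle_cycleOf p hpx
  have hxc : x ∈ (p.cycleOf x).support :=
    Equiv.Perm.mem_support_cycleOf_iff.mpr ⟨Equiv.Perm.SameCycle.refl _ _, hx⟩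
  have hcx : (p.cycleOf x) x ≠ x := Equiv.Perm.mem_support.mp hxc
  rw [← hc.orderOf]
  have h2 : orderOf (p.cycleOf x) ∣ Function.minimalPeriod ⇑p x := by
    apply orderOf_dvd_of_pow_eq_one
    rw [hc.pow_eq_one_iff' hcx, Equiv.Perm.cycleOf_pow_apply_self]
    exact Function.isPeriodicPt_minimalPeriod ⇑p x
  have h1 : Function.minimalPeriod ⇑p x ∣ orderOf (p.cycleOf x) := by
    apply Function.IsPeriodicPt.minimalPeriod_dvd
    show p^[orderOf (p.cycleOf x)] x = x
    rw [Equiv.Perm.iterate_eq_pow, ← Equiv.Perm.cycleOf_pow_apply_self,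
      pow_orderOf_eq_one, Equiv.Perm.one_apply]
  exact Nat.dvd_antisymm h1 h2

open scoped Classical in
/-- The multiset of cycle lengths at cycle-minimal representatives is the
partition of the permutation. -/
private lemma map_cycLen_minSet {n : ℕ} (p : Perm (Fin n)) :
    ((Finset.univ.filter (fun i : Fin n => ∀ j : Fin n, p.SameCycle i j → i ≤ j)).val.map
      (cycLen p)) = p.partition.parts := by
  set S := Finset.univ.filter (fun i : Fin n => ∀ j : Fin n, p.SameCycle i j → i ≤ j) with hS
  have hsplit : S.val = (S.val.filter (· ∈ p.support)) + (S.val.filter (¬ · ∈ p.support)) :=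
    (Multiset.filter_add_not _ _).symm
  have hfix : S.val.filter (¬ · ∈ p.support) = (p.supportᶜ).val := by
    have : S.filter (fun i => ¬ i ∈ p.support) = p.supportᶜ := by
      ext i
      simp only [hS, Finset.mem_filter, Finset.mem_univ, true_and, Finset.mem_compl,
        Equiv.Perm.mem_support, not_not]
      constructor
      · exact fun h => h.2
      · intro hfix
        refine ⟨fun j hj => ?_, by simpa [Equiv.Perm.mem_support] ⟩
        obtain ⟨m, hm⟩ := hj
        rw [← hm, Equiv.Perm.zpow_apply_eq_self_of_apply_eq_self hfix m]
    calc S.val.filter (¬ · ∈ p.support)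
        = (S.filter (fun i => ¬ i ∈ p.support)).val := rfl
      _ = (p.supportᶜ).val := by rw [this]
  -- the fixed-point part gives parts equal to 1
  have hfix2 : (S.val.filter (¬ · ∈ p.support)).map (cycLen p)
      = Multiset.replicate (Fintype.card (Fin n) - p.support.card) 1 := by
    rw [hfix]
    have : ∀ i ∈ (p.supportᶜ).val, cycLen p i = 1 := by
      intro i hi
      have : p i = i := by
        have := Finset.mem_compl.mp (Finset.mem_val.mp hi)
        simpa [Equiv.Perm.mem_support, not_not] using this
      exact Function.minimalPeriod_eq_one_iff_isFixedPt.mpr this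
    rw [Multiset.map_congr rfl this, Multiset.map_const']
    simp [Finset.card_compl]
  -- the support part gives the cycle type
  have hsupp : (S.val.filter (· ∈ p.support)).map (cycLen p) = p.cycleType := by
    set T := S.filter (fun i => i ∈ p.support) with hT
    have hTval : S.val.filter (· ∈ p.support) = T.val := rfl
    rw [hTval]
    have hmem : ∀ i ∈ T, p.cycleOf i ∈ p.cycleFactorsFinset := by
      intro i hi
      exact Equiv.Perm.cycleOf_mem_cycleFactorsFinset_iff.mpr (Finset.mem_filter.mp hi).2
    have hmin : ∀ i ∈ T, ∀ j : Fin n, p.SameCycle i j → i ≤ j := by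
      intro i hi
      exact (Finset.mem_filter.mp ((Finset.mem_filter.mp hi).1)).2
    have hinj : ∀ i ∈ T, ∀ j ∈ T, p.cycleOf i = p.cycleOf j → i = j := by
      intro i hi j hj hij
      have hjs : j ∈ p.support := (Finset.mem_filter.mp hj).2
      have hji : j ∈ (p.cycleOf j).support :=
        Equiv.Perm.mem_support_cycleOf_iff.mpr ⟨Equiv.Perm.SameCycle.refl _ _, hjs⟩
      have h1 : p.SameCycle i j := by
        have := hji; rw [← hij] at this
        exact (Equiv.Perm.mem_support_cycleOf_iff.mp this).1
      exact le_antisymm (hmin i hi j h1) (hmin j hj i h1.symm)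
    have himg : T.image (fun i => p.cycleOf i) = p.cycleFactorsFinset := by
      apply Finset.ext
      intro c
      constructor
      · intro hc
        obtain ⟨i, hi, rfl⟩ := Finset.mem_image.mp hc
        exact hmem i hi
      · intro hc
        have hcyc : c.IsCycle := (Equiv.Perm.mem_cycleFactorsFinset_iff.mp hc).1
        have hne : c.support.Nonempty :=
          Finset.card_pos.mp (lt_of_lt_of_le two_pos hcyc.two_le_card_support)
        set x := c.support.min' hne with hx
        have hxc : x ∈ c.support := c.support.min'_mem hne
        have hceq : c = p.cycleOf x := Equiv.Perm.cycle_is_cycleOf hxc hc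
        have hxs : x ∈ p.support := by
          have := (Equiv.Perm.mem_cycleFactorsFinset_iff.mp hc).2 x hxc
          rw [Equiv.Perm.mem_support, ← this]
          exact Equiv.Perm.mem_support.mp hxc
        have hxmin : ∀ j : Fin n, p.SameCycle x j → x ≤ j := by
          intro j hj
          have hjc : j ∈ c.support := by
            rw [hceq]
            exact Equiv.Perm.mem_support_cycleOf_iff.mpr ⟨hj, hxs⟩
          exact c.support.min'_le j hjc
        refine Finset.mem_image.mpr ⟨x, ?_, hceq.symm⟩
        rw [hT, hS]
        simp only [Finset.mem_filter, Finset.mem_univ, true_and]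
        exact ⟨hxmin, hxs⟩
    have hnodup : (T.val.map (fun i => p.cycleOf i)).Nodup :=
      Multiset.Nodup.map_on hinj T.nodup
    have himgval : T.val.map (fun i => p.cycleOf i) = p.cycleFactorsFinset.val := by
      rw [← himg, Finset.image_val, Multiset.dedup_eq_self.mpr hnodup]
    have hcong : T.val.map (cycLen p)
        = T.val.map ((Finset.card ∘ Equiv.Perm.support) ∘ (fun i => p.cycleOf i)) := by
      apply Multiset.map_congr rfl
      intro i hi
      exact cycLen_eq_card_support_cycleOf p (Finset.mem_filter.mp (Finset.mem_val.mp hi)).2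
    rw [hcong, ← Multiset.map_map, himgval, Equiv.Perm.cycleType_def]
  rw [hsplit, Multiset.map_add, hsupp, hfix2, Equiv.Perm.parts_partition]

open scoped Classical in
/-- The sum of the `tyFam` multisets is the multiset of cycle lengths at cycle-minimal
representatives. -/
private lemma sum_tyFam_eq (k n : ℕ) (hk : 0 < k) (w : Perm (Fin (k * n))) :
    (∑ ρ : Nat.Partition k, tyFam k n hk w ρ)
      = ((Finset.univ.filter (fun i : Fin n =>
            ∀ j : Fin n, (pPerm k n hk w).SameCycle i j → i ≤ j)).val.map
          (cycLen (pPerm k n hk w))) := by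
  set p := pPerm k n hk w with hp
  set S := Finset.univ.filter (fun i : Fin n => ∀ j : Fin n, p.SameCycle i j → i ≤ j) with hS
  -- the partition of `k` attached to an index `i`
  have hcard : ∀ i : Fin n, ((cycProd k n hk w i).partition.parts).sum = k := by
    intro i
    have := (cycProd k n hk w i).partition.parts_sum
    simpa using this
  have hpos : ∀ i : Fin n, ∀ {m : ℕ}, m ∈ (cycProd k n hk w i).partition.parts → 0 < m := by
    intro i m hm
    exact (cycProd k n hk w i).partition.parts_pos hm
  set g : Fin n → Nat.Partition k := fun i =>
    ⟨(cycProd k n hk w i).partition.parts, hpos i, hcard i⟩ with hg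
  have hfilter : ∀ ρ : Nat.Partition k,
      (Finset.univ.filter (fun i : Fin n =>
        (∀ j : Fin n, p.SameCycle i j → i ≤ j) ∧
        (cycProd k n hk w i).partition.parts = ρ.parts))
      = S.filter (fun i => g i = ρ) := by
    intro ρ
    rw [hS, Finset.filter_filter]
    apply Finset.filter_congr
    intro i _
    constructor
    · rintro ⟨h1, h2⟩
      exact ⟨h1, Nat.Partition.ext h2⟩
    · rintro ⟨h1, h2⟩
      exact ⟨h1, congrArg Nat.Partition.parts h2⟩
  have hsingle : ∀ (t : Finset (Fin n)),
      t.val.map (cycLen p) = ∑ i ∈ t, ({cycLen p i} : Multiset ℕ) := by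
    intro t
    rw [Finset.sum_eq_multiset_sum]
    rw [show t.val.map (fun i => ({cycLen p i} : Multiset ℕ))
        = (t.val.map (cycLen p)).map (fun a => ({a} : Multiset ℕ)) by
      rw [Multiset.map_map]; rfl]
    rw [Multiset.sum_map_singleton]
  have : (∑ ρ : Nat.Partition k, tyFam k n hk w ρ)
      = ∑ ρ : Nat.Partition k, ∑ i ∈ S.filter (fun i => g i = ρ),
          ({cycLen p i} : Multiset ℕ) := by
    apply Finset.sum_congr rfl
    intro ρ _
    rw [tyFam]
    rw [show (Finset.univ.filter (fun i : Fin n =>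
        (∀ j : Fin n, (pPerm k n hk w).SameCycle i j → i ≤ j) ∧
        (cycProd k n hk w i).partition.parts = ρ.parts))
      = S.filter (fun i => g i = ρ) from hfilter ρ]
    exact hsingle _
  rw [this, Finset.sum_fiberwise S g (fun i => ({cycLen p i} : Multiset ℕ)),
    ← hsingle S]

private lemma multiset_sum_sum {α : Type*} (s : Finset α) (f : α → Multiset ℕ) :
    (∑ a ∈ s, f a).sum = ∑ a ∈ s, (f a).sum := by
  classical
  induction s using Finset.induction with
  | empty => simp
  | insert a s h ih => simp [Finset.sum_insert h, ih]

/-- For `w ∈ B_{kn}^k`, the union of the partitions `ω(ρ)` over the partitions `ρ` of `k`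
is the cycle type of the induced block permutation `p_w`, and `∑_ρ |ω(ρ)| = n`. -/
theorem tyFam_union_eq_cycleType (k n : ℕ) (hk : 0 < k) (w : Perm (Fin (k * n)))
    (hw : IsBlockPerm k n w) :
    (∑ ρ : Nat.Partition k, tyFam k n hk w ρ) = (pPerm k n hk w).partition.parts ∧
    (∑ ρ : Nat.Partition k, (tyFam k n hk w ρ).sum) = n := by
  classical
  have key : (∑ ρ : Nat.Partition k, tyFam k n hk w ρ) = (pPerm k n hk w).partition.parts := by
    rw [sum_tyFam_eq k n hk w, map_cycLen_minSet]
  refine ⟨key, ?_⟩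
  rw [← multiset_sum_sum, key]
  have := (pPerm k n hk w).partition.parts_sum
  simpa using this

end KWr
end
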